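/- arXiv:1807.10062 — 5 statements merged into one kernel-verified Lean document; each statement's English description precedes it below -/
import Mathlib

section
/- For every integer n ≥ 3, f(n, B(2K_2)) = 2^n − n(n−1)/2 − n − 1, where 2K_2 is the graph consisting of two vertex-disjoint edges. -/
open SimpleGraph

/-- A set family `A` of hyperedges contains a Berge-`G` hypergraph. -/
def BergeIn {V α : Type} (G : SimpleGraph V) (A : Set (Finset α)) : Prop :=
  ∃ φ : V → α, Function.Injective φ ∧
    ∃ ψ : G.edgeSet → Finset α, Function.Injective ψ ∧
      (∀ e, ψ e ∈ A) ∧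
      ∀ (e : G.edgeSet), ∀ x ∈ (e : Sym2 V), φ x ∈ ψ e

/-- `f(n, 𝓑(G))`: the smallest number of colors in a coloring of all subsets of an `n`-element
set with no monochromatic Berge-`G`. -/
noncomputable def bergeColorNumber {V : Type} (G : SimpleGraph V) (n : ℕ) : ℕ :=
  sInf {m | ∃ c : Finset (Fin n) → Fin m,
    ∀ i, ¬ BergeIn G {s : Finset (Fin n) | c s = i}}

/-- `2K₂`: two vertex-disjoint edges. -/
def twoK2 : SimpleGraph (Fin 4) := SimpleGraph.fromEdgeSet {s(0, 1), s(2, 3)}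

/- ### Auxiliary lemmas about the edge set of `twoK2` -/

lemma twoK2_mem1 : s(0,1) ∈ twoK2.edgeSet := by
  rw [SimpleGraph.mem_edgeSet, twoK2, SimpleGraph.fromEdgeSet_adj]
  exact ⟨Or.inl rfl, by decide⟩

lemma twoK2_mem2 : s(2,3) ∈ twoK2.edgeSet := by
  rw [SimpleGraph.mem_edgeSet, twoK2, SimpleGraph.fromEdgeSet_adj]
  exact ⟨Or.inr rfl, by decide⟩

lemma twoK2_edge_cases (e : twoK2.edgeSet) :
    (e : Sym2 (Fin 4)) = s(0,1) ∨ (e : Sym2 (Fin 4)) = s(2,3) := by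
  have h : (e : Sym2 (Fin 4)) ∈ (SimpleGraph.fromEdgeSet {s(0,1),s(2,3)}).edgeSet := e.2
  rw [SimpleGraph.edgeSet_fromEdgeSet] at h
  exact h.1

/- ### Constructing and destructing a Berge-`2K₂` -/

lemma bergeIn_intro {α : Type} (Cl : Set (Finset α)) {A B : Finset α} (hA : A ∈ Cl) (hB : B ∈ Cl)
    (hne : A ≠ B) {a b c d : α} (ha : a ∈ A) (hb : b ∈ A) (hc : c ∈ B) (hd : d ∈ B)
    (hab : a ≠ b) (hcd : c ≠ d) (hac : a ≠ c) (had : a ≠ d) (hbc : b ≠ c) (hbd : b ≠ d) :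
    BergeIn twoK2 Cl := by
  refine ⟨![a,b,c,d], ?_, fun e => if (e : Sym2 (Fin 4)) = s(0,1) then A else B, ?_, ?_, ?_⟩
  · intro x y hxy
    fin_cases x <;> fin_cases y <;> simp_all
  · intro e1 e2 h
    rcases twoK2_edge_cases e1 with h1 | h1 <;> rcases twoK2_edge_cases e2 with h2 | h2 <;>
      simp only [h1, h2, if_pos rfl,
        if_neg (by decide : (s(2,3) : Sym2 (Fin 4)) ≠ s(0,1))] at h ⊢ <;>
      first
        | exact Subtype.ext (h1.trans h2.symm)
        | exact absurd h hne
        | exact absurd h (Ne.symm hne)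
  · intro e; dsimp only; split <;> assumption
  · intro e x hx
    rcases twoK2_edge_cases e with h1 | h1 <;> rw [h1] at hx <;>
      rcases Sym2.mem_iff.mp hx with rfl | rfl <;>
      simp [h1, (by decide : (s(2,3) : Sym2 (Fin 4)) ≠ s(0,1)), ha, hb, hc, hd]

lemma bergeIn_elim {α : Type} {Cl : Set (Finset α)} (h : BergeIn twoK2 Cl) :
    ∃ A ∈ Cl, ∃ B ∈ Cl, A ≠ B ∧ ∃ a b c d : α, a ∈ A ∧ b ∈ A ∧ c ∈ B ∧ d ∈ B ∧
      a ≠ b ∧ c ≠ d ∧ a ≠ c ∧ a ≠ d ∧ b ≠ c ∧ b ≠ d := by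
  obtain ⟨φ, hφ, ψ, hψ, hmem, hinc⟩ := h
  refine ⟨ψ ⟨_, twoK2_mem1⟩, hmem _, ψ ⟨_, twoK2_mem2⟩, hmem _, ?_,
    φ 0, φ 1, φ 2, φ 3, ?_, ?_, ?_, ?_, ?_, ?_, ?_, ?_, ?_, ?_⟩
  · intro hh
    exact (by decide : (s(0,1) : Sym2 (Fin 4)) ≠ s(2,3)) (congrArg Subtype.val (hψ hh))
  · exact hinc _ 0 (by simp)
  · exact hinc _ 1 (by simp)
  · exact hinc _ 2 (by simp)
  · exact hinc _ 3 (by simp)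
  all_goals exact fun hh => (by decide : ¬ _) (hφ hh)

/- ### The two-matching lemma -/

lemma sdiff_card_ge {α : Type} [DecidableEq α] (A t : Finset α) :
    A.card - t.card ≤ (A \ t).card := by
  have := Finset.card_le_card_sdiff_add_card (s := A) (t := t)
  omega

lemma exists_two_matching {α : Type} [DecidableEq α] {A B : Finset α}
    (hA : 2 ≤ A.card) (hB : 2 ≤ B.card) (hU : 4 ≤ (A ∪ B).card) :
    ∃ a b c d : α, a ∈ A ∧ b ∈ A ∧ c ∈ B ∧ d ∈ B ∧
      a ≠ b ∧ c ≠ d ∧ a ≠ c ∧ a ≠ d ∧ b ≠ c ∧ b ≠ d := by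
  by_cases h2 : 2 ≤ (B \ A).card
  · obtain ⟨c, hc, d, hd, hcd⟩ := Finset.one_lt_card.mp h2
    obtain ⟨a, ha, b, hb, hab⟩ := Finset.one_lt_card.mp hA
    have hc' := Finset.mem_sdiff.mp hc
    have hd' := Finset.mem_sdiff.mp hd
    exact ⟨a, b, c, d, ha, hb, hc'.1, hd'.1, hab, hcd,
      fun h => hc'.2 (h ▸ ha), fun h => hd'.2 (h ▸ ha),
      fun h => hc'.2 (h ▸ hb), fun h => hd'.2 (h ▸ hb)⟩
  · push_neg at h2
    have hAcard : 3 ≤ A.card := by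
      have h1 : (A ∪ B).card ≤ A.card + (B \ A).card := by
        rw [Finset.union_comm, ← Finset.card_sdiff_add_card]; omega
      omega
    by_cases hBA : (B \ A).Nonempty
    · obtain ⟨c, hc⟩ := hBA
      have hc' := Finset.mem_sdiff.mp hc
      obtain ⟨d, hd, hdc⟩ : ∃ d ∈ B, d ≠ c := by
        obtain ⟨x, hx, y, hy, hxy⟩ := Finset.one_lt_card.mp hB
        by_cases hxc : x = c
        · exact ⟨y, hy, fun h => hxy (hxc.trans h.symm)⟩
        · exact ⟨x, hx, hxc⟩
      have h3 : 2 ≤ (A \ {d}).card := by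
        have := sdiff_card_ge A {d}
        simp only [Finset.card_singleton] at this
        omega
      obtain ⟨a, ha, b, hb, hab⟩ := Finset.one_lt_card.mp h3
      have ha' := Finset.mem_sdiff.mp ha
      have hb' := Finset.mem_sdiff.mp hb
      have had : a ≠ d := by simpa using ha'.2
      have hbd : b ≠ d := by simpa using hb'.2
      exact ⟨a, b, c, d, ha'.1, hb'.1, hc'.1, hd, hab, fun h => hdc h.symm,
        fun h => hc'.2 (h ▸ ha'.1), had, fun h => hc'.2 (h ▸ hb'.1), hbd⟩
    · have hBsub : B ⊆ A := by
        intro x hx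
        by_contra hxA
        exact hBA ⟨x, Finset.mem_sdiff.mpr ⟨hx, hxA⟩⟩
      have hA4 : 4 ≤ A.card := by
        rwa [Finset.union_eq_left.mpr hBsub] at hU
      obtain ⟨c, hc, d, hd, hcd⟩ := Finset.one_lt_card.mp hB
      have h3 : 2 ≤ (A \ {c, d}).card := by
        have h4 : ({c, d} : Finset α).card ≤ 2 :=
          (Finset.card_insert_le _ _).trans (by simp)
        have h5 := sdiff_card_ge A {c, d}
        omega
      obtain ⟨a, ha, b, hb, hab⟩ := Finset.one_lt_card.mp h3
      have ha' := Finset.mem_sdiff.mp ha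
      have hb' := Finset.mem_sdiff.mp hb
      simp only [Finset.mem_insert, Finset.mem_singleton, not_or] at ha' hb'
      exact ⟨a, b, c, d, ha'.1, hb'.1, hc, hd, hab, hcd,
        ha'.2.1, ha'.2.2, hb'.2.1, hb'.2.2⟩

/- ### Counting lemmas -/

lemma cnt_eq (n k : ℕ) :
    ((Finset.univ : Finset (Finset (Fin n))).filter (fun s => s.card = k)).card = n.choose k := by
  have h : (Finset.univ.filter (fun s : Finset (Fin n) => s.card = k))
      = Finset.powersetCard k Finset.univ := by
    ext s; simp [Finset.mem_powersetCard_univ]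
  rw [h, Finset.card_powersetCard, Finset.card_univ, Fintype.card_fin]

lemma cnt_lt (n k : ℕ) :
    ((Finset.univ : Finset (Finset (Fin n))).filter (fun s => s.card < k)).card
      = ∑ j ∈ Finset.range k, n.choose j := by
  induction k with
  | zero => simp
  | succ k ih =>
    have h : (Finset.univ.filter (fun s : Finset (Fin n) => s.card < k + 1))
        = (Finset.univ.filter (fun s => s.card < k))
          ∪ (Finset.univ.filter (fun s => s.card = k)) := by
      ext s; simp; omega
    rw [h, Finset.card_union_of_disjoint, ih, cnt_eq, Finset.sum_range_succ]
    rw [Finset.disjoint_left]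
    intro s hs hs'
    simp at hs hs'; omega

lemma cnt_ge (n k : ℕ) :
    ((Finset.univ : Finset (Finset (Fin n))).filter (fun s => k ≤ s.card)).card
      = 2 ^ n - ∑ j ∈ Finset.range k, n.choose j := by
  have h := Finset.card_filter_add_card_filter_not
    (s := (Finset.univ : Finset (Finset (Fin n)))) (p := fun s => s.card < k)
  have h2 : (Finset.univ.filter (fun s : Finset (Fin n) => ¬ s.card < k))
      = Finset.univ.filter (fun s => k ≤ s.card) := by
    ext s; simp
  have h3 : (Finset.univ : Finset (Finset (Fin n))).card = 2 ^ n := by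
    rw [Finset.card_univ, Fintype.card_finset, Fintype.card_fin]
  rw [h2, cnt_lt] at h
  omega

lemma cnt_ge_two (n : ℕ) :
    ((Finset.univ : Finset (Finset (Fin n))).filter (fun s => 2 ≤ s.card)).card
      = 2 ^ n - n - 1 := by
  rw [cnt_ge]
  have : ∑ j ∈ Finset.range 2, n.choose j = 1 + n := by
    simp [Finset.sum_range_succ]
  omega

lemma cnt_ge_three (n : ℕ) :
    ((Finset.univ : Finset (Finset (Fin n))).filter (fun s => 3 ≤ s.card)).card
      = 2 ^ n - n * (n - 1) / 2 - n - 1 := by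
  rw [cnt_ge]
  have : ∑ j ∈ Finset.range 3, n.choose j = 1 + n + n * (n-1)/2 := by
    simp [Finset.sum_range_succ, Nat.choose_two_right]
  omega

/- ### Lower bound -/

lemma twoK2_lower_bound {n m : ℕ} (c : Finset (Fin n) → Fin m)
    (hc : ∀ i, ¬ BergeIn twoK2 {s : Finset (Fin n) | c s = i}) :
    2 ^ n - n * (n - 1) / 2 - n - 1 ≤ m := by
  classical
  -- in each color class there is at most one set of size ≥ 3
  have key : ∀ (i : Fin m) (A B : Finset (Fin n)), c A = i → c B = i →
      3 ≤ A.card → 3 ≤ B.card → A = B := by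
    intro i A B hcA hcB hA3 hB3
    by_contra hne
    have hU : 4 ≤ (A ∪ B).card := by
      by_contra hU
      push_neg at hU
      have hsubA : A ⊆ A ∪ B := Finset.subset_union_left
      have hsubB : B ⊆ A ∪ B := Finset.subset_union_right
      have hAU : A = A ∪ B := Finset.eq_of_subset_of_card_le hsubA
        (by have := Finset.card_le_card hsubA; omega)
      have hBU : B = A ∪ B := Finset.eq_of_subset_of_card_le hsubB
        (by have := Finset.card_le_card hsubB; omega)
      exact hne (hAU.trans hBU.symm)
    obtain ⟨a, b, cc, d, ha, hb, hcc, hd, h1, h2, h3, h4, h5, h6⟩ :=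
      exists_two_matching (by omega) (by omega) hU
    exact hc i (bergeIn_intro _ hcA hcB hne ha hb hcc hd h1 h2 h3 h4 h5 h6)
  set big : Finset (Finset (Fin n)) := Finset.univ.filter (fun s => 2 ≤ s.card) with hbig
  set pairs : Finset (Finset (Fin n)) := Finset.univ.filter (fun s => s.card = 2) with hpairs
  have hbigsum : big.card = ∑ i ∈ (Finset.univ : Finset (Fin m)),
      (big.filter (fun s => c s = i)).card :=
    Finset.card_eq_sum_card_fiberwise (fun x _ => Finset.mem_univ _)
  have hpairsum : pairs.card = ∑ i ∈ (Finset.univ : Finset (Fin m)),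
      (pairs.filter (fun s => c s = i)).card :=
    Finset.card_eq_sum_card_fiberwise (fun x _ => Finset.mem_univ _)
  have hfiber : ∀ i : Fin m, (big.filter (fun s => c s = i)).card
      ≤ (pairs.filter (fun s => c s = i)).card + 1 := by
    intro i
    have hsplit : big.filter (fun s => c s = i)
        = (pairs.filter (fun s => c s = i))
          ∪ (Finset.univ.filter (fun s => 3 ≤ s.card ∧ c s = i)) := by
      ext s
      simp only [hbig, hpairs, Finset.mem_filter, Finset.mem_union, Finset.mem_univ, true_and]
      constructor
      · rintro ⟨h1, h2⟩
        by_cases h3 : s.card = 2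
        · exact Or.inl ⟨h3, h2⟩
        · exact Or.inr ⟨by omega, h2⟩
      · rintro (⟨h1, h2⟩ | ⟨h1, h2⟩) <;> exact ⟨by omega, h2⟩
    have hdisj : Disjoint (pairs.filter (fun s => c s = i))
        (Finset.univ.filter (fun s => 3 ≤ s.card ∧ c s = i)) := by
      rw [Finset.disjoint_left]
      intro s hs hs'
      simp only [hpairs, Finset.mem_filter, Finset.mem_univ, true_and] at hs hs'
      omega
    have hT : (Finset.univ.filter (fun s : Finset (Fin n) => 3 ≤ s.card ∧ c s = i)).card ≤ 1 := by
      rw [Finset.card_le_one]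
      intro A hA B hB
      simp only [Finset.mem_filter, Finset.mem_univ, true_and] at hA hB
      exact key i A B hA.2 hB.2 hA.1 hB.1
    rw [hsplit, Finset.card_union_of_disjoint hdisj]
    omega
  have hsum : big.card ≤ pairs.card + m := by
    rw [hbigsum, hpairsum]
    calc ∑ i ∈ (Finset.univ : Finset (Fin m)), (big.filter (fun s => c s = i)).card
        ≤ ∑ i ∈ (Finset.univ : Finset (Fin m)),
            ((pairs.filter (fun s => c s = i)).card + 1) :=
          Finset.sum_le_sum (fun i _ => hfiber i)
      _ = (∑ i ∈ (Finset.univ : Finset (Fin m)),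
            (pairs.filter (fun s => c s = i)).card) + m := by
          rw [Finset.sum_add_distrib]
          simp [Finset.card_univ]
  have h1 : big.card = 2 ^ n - n - 1 := cnt_ge_two n
  have h2 : pairs.card = n * (n - 1) / 2 := by
    rw [hpairs, cnt_eq, Nat.choose_two_right]
  rw [h1, h2] at hsum
  omega

/- ### Upper bound -/

lemma twoK2_upper_bound {n : ℕ} (hn : 3 ≤ n) :
    ∃ c : Finset (Fin n) → Fin (2 ^ n - n * (n - 1) / 2 - n - 1),
      ∀ i, ¬ BergeIn twoK2 {s : Finset (Fin n) | c s = i} := by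
  classical
  -- a point outside every 2-element set
  have hex : ∀ s : Finset (Fin n), ∃ x : Fin n, (s.card = 2 → x ∉ s) := by
    intro s
    by_cases hs : s.card = 2
    · have hne : (sᶜ : Finset (Fin n)).Nonempty := by
        rw [← Finset.card_pos, Finset.card_compl, Fintype.card_fin]
        omega
      obtain ⟨x, hx⟩ := hne
      exact ⟨x, fun _ => Finset.mem_compl.mp hx⟩
    · exact ⟨⟨0, by omega⟩, fun h => absurd h hs⟩
  choose f hf using hex
  -- the base triple for small sets
  set T0 : Finset (Fin n) := {⟨0, by omega⟩, ⟨1, by omega⟩, ⟨2, by omega⟩} with hT0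
  have hT0card : T0.card = 3 := by
    rw [hT0]
    rw [Finset.card_insert_of_notMem (by simp [Fin.ext_iff]),
      Finset.card_insert_of_notMem (by simp [Fin.ext_iff]), Finset.card_singleton]
  -- the key of a set
  set keyf : Finset (Fin n) → Finset (Fin n) := fun s =>
    if s.card ≤ 1 then T0 else if s.card = 2 then insert (f s) s else s with hkeyf
  have hkey3 : ∀ s, 3 ≤ (keyf s).card := by
    intro s
    rw [hkeyf]
    dsimp only
    split
    · omega
    · split
      · rename_i h1 h2
        rw [Finset.card_insert_of_notMem (hf s h2)]
        omega
      · omega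
  have hkeysub : ∀ s : Finset (Fin n), 2 ≤ s.card → s ⊆ keyf s := by
    intro s hs
    rw [hkeyf]
    dsimp only
    rw [if_neg (by omega)]
    split
    · exact Finset.subset_insert _ _
    · exact Finset.Subset.refl _
  have hkeycard : ∀ s : Finset (Fin n), s.card = 2 → (keyf s).card = 3 := by
    intro s hs
    rw [hkeyf]
    dsimp only
    rw [if_neg (by omega), if_pos hs, Finset.card_insert_of_notMem (hf s hs), hs]
  have hkeyid : ∀ s : Finset (Fin n), 3 ≤ s.card → keyf s = s := by
    intro s hs
    rw [hkeyf]
    dsimp only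
    rw [if_neg (by omega), if_neg (by omega)]
  -- keys live in the sets of size ≥ 3
  set I : Finset (Finset (Fin n)) := Finset.univ.filter (fun s => 3 ≤ s.card) with hI
  have hIcard : I.card = 2 ^ n - n * (n - 1) / 2 - n - 1 := cnt_ge_three n
  have hmemI : ∀ s : Finset (Fin n), keyf s ∈ I := by
    intro s
    rw [hI, Finset.mem_filter]
    exact ⟨Finset.mem_univ _, hkey3 s⟩
  set e := Finset.equivFinOfCardEq hIcard with he
  refine ⟨fun s => e ⟨keyf s, hmemI s⟩, ?_⟩
  intro i hB
  obtain ⟨A, hA, B, hBmem, hne, a, b, cc, d, ha, hb, hcc, hd, h1, h2, h3, h4, h5, h6⟩ :=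
    bergeIn_elim hB
  simp only [Set.mem_setOf_eq] at hA hBmem
  have hkeyeq : keyf A = keyf B := by
    have := hA.trans hBmem.symm
    have h := e.injective this
    exact congrArg Subtype.val h
  have hA2 : 2 ≤ A.card := Finset.one_lt_card.mpr ⟨a, ha, b, hb, h1⟩
  have hB2 : 2 ≤ B.card := Finset.one_lt_card.mpr ⟨cc, hcc, d, hd, h2⟩
  have hAT : A ⊆ keyf A := hkeysub A hA2
  have hBT : B ⊆ keyf A := hkeyeq ▸ hkeysub B hB2
  have h4T : 4 ≤ (keyf A).card := by
    have hsub : ({a, b, cc, d} : Finset (Fin n)) ⊆ keyf A := by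
      intro x hx
      simp only [Finset.mem_insert, Finset.mem_singleton] at hx
      rcases hx with rfl | rfl | rfl | rfl
      · exact hAT ha
      · exact hAT hb
      · exact hBT hcc
      · exact hBT hd
    have hcard4 : ({a, b, cc, d} : Finset (Fin n)).card = 4 := by
      rw [Finset.card_insert_of_notMem (by simp [h1, h3, h4]),
        Finset.card_insert_of_notMem (by simp [h5, h6]),
        Finset.card_insert_of_notMem (by simp [h2]), Finset.card_singleton]
    calc 4 = ({a, b, cc, d} : Finset (Fin n)).card := hcard4.symm
      _ ≤ (keyf A).card := Finset.card_le_card hsub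
  have hA3 : 3 ≤ A.card := by
    rcases Nat.lt_or_ge A.card 3 with h | h
    · have : A.card = 2 := by omega
      have h9 := hkeycard A this
      omega
    · exact h
  have hB3 : 3 ≤ B.card := by
    rcases Nat.lt_or_ge B.card 3 with h | h
    · have : B.card = 2 := by omega
      have h' := hkeycard B this
      rw [← hkeyeq] at h'
      omega
    · exact h
  have : A = B := by
    rw [← hkeyid A hA3, ← hkeyid B hB3, hkeyeq]
  exact hne this

/- ### The main theorem -/

/-- For every `n ≥ 3`, `f(n, 𝓑(2K₂)) = 2^n - n(n-1)/2 - n - 1`. -/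
theorem bergeColorNumber_twoK2 (n : ℕ) (hn : 3 ≤ n) :
    bergeColorNumber twoK2 n = 2 ^ n - n * (n - 1) / 2 - n - 1 := by
  rw [bergeColorNumber]
  apply le_antisymm
  · exact Nat.sInf_le (twoK2_upper_bound hn)
  · exact le_csInf ⟨_, twoK2_upper_bound hn⟩ (fun m ⟨c, hcm⟩ => twoK2_lower_bound c hcm)
end

section
/- For every integer n ≥ 2 there exists a coloring of the 3-element subsets of {1, …, n} with at most 2⌈log₂ n⌉² colors such that every color class is 3-partite, i.e., for each color there is a partition of {1, …, n} into three parts such that every 3-set of that color has exactly one element in each part. In particular, no color class contains a Berge-K_4, and consequently R_3(B(K_4), k) > 2^{⌊√(k/2)⌋} for every integer k ≥ 2. -/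
open SimpleGraph

/-- Every `k`-coloring of the `r`-element subsets of an `n`-element set contains a
monochromatic Berge-`G`. -/
def BergeRamseyProp {V : Type} (G : SimpleGraph V) (r k n : ℕ) : Prop :=
  ∀ c : Finset (Fin n) → Fin k, ∃ i : Fin k,
    BergeIn G {s : Finset (Fin n) | s.card = r ∧ c s = i}

/-- `R_r(𝓑(G), k)`. -/
noncomputable def bergeRamsey {V : Type} (G : SimpleGraph V) (r k : ℕ) : ℕ :=
  sInf {n | BergeRamseyProp G r k n}

/-- The complete graph `K₄`. -/
def K4 : SimpleGraph (Fin 4) := ⊤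

/-- Highest bit (below `m`) where `x` and `y` differ. -/
def diffBit (m x y : ℕ) : ℕ := Nat.findGreatest (fun t => x.testBit t ≠ y.testBit t) m

lemma testBit_high {m x t : ℕ} (hx : x < 2 ^ m) (ht : m ≤ t) : x.testBit t = false :=
  Nat.testBit_lt_two_pow (lt_of_lt_of_le hx (Nat.pow_le_pow_right (by norm_num) ht))

lemma diffBit_spec {m x y : ℕ} (hx : x < 2 ^ m) (hy : y < 2 ^ m) (hne : x ≠ y) :
    x.testBit (diffBit m x y) ≠ y.testBit (diffBit m x y) := by
  have h : ∃ t, x.testBit t ≠ y.testBit t := by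
    by_contra h
    push_neg at h
    exact hne (Nat.eq_of_testBit_eq fun i => by simpa using h i)
  obtain ⟨t, ht⟩ := h
  have htm : t ≤ m := by
    by_contra hc
    push_neg at hc
    rw [testBit_high hx hc.le, testBit_high hy hc.le] at ht
    exact ht rfl
  exact Nat.findGreatest_spec (P := fun t => x.testBit t ≠ y.testBit t) htm ht

lemma diffBit_lt {m x y : ℕ} (hx : x < 2 ^ m) (hy : y < 2 ^ m) (hne : x ≠ y) :
    diffBit m x y < m := by
  rcases lt_or_eq_of_le (Nat.findGreatest_le (P := fun t => x.testBit t ≠ y.testBit t) m) with h | h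
  · exact h
  · exfalso
    have hsp := diffBit_spec hx hy hne
    rw [show diffBit m x y = m from h, testBit_high hx le_rfl, testBit_high hy le_rfl] at hsp
    exact hsp rfl

lemma diffBit_agree {m x y t : ℕ} (hx : x < 2 ^ m) (hy : y < 2 ^ m)
    (ht : diffBit m x y < t) : x.testBit t = y.testBit t := by
  rcases le_or_gt t m with h | h
  · by_contra hc
    exact Nat.findGreatest_is_greatest (P := fun t => x.testBit t ≠ y.testBit t) ht h hc
  · rw [testBit_high hx h.le, testBit_high hy h.le]

lemma diffBit_div_eq {m x y : ℕ} (hx : x < 2 ^ m) (hy : y < 2 ^ m) :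
    x / 2 ^ (diffBit m x y + 1) = y / 2 ^ (diffBit m x y + 1) := by
  apply Nat.eq_of_testBit_eq
  intro t
  rw [← Nat.shiftRight_eq_div_pow, ← Nat.shiftRight_eq_div_pow,
      Nat.testBit_shiftRight, Nat.testBit_shiftRight]
  exact diffBit_agree hx hy (by omega)

lemma diffBit_bits {m x y : ℕ} (hx : x < 2 ^ m) (hy : y < 2 ^ m) (hlt : x < y) :
    x.testBit (diffBit m x y) = false ∧ y.testBit (diffBit m x y) = true := by
  set d := diffBit m x y with hd
  have hne := diffBit_spec hx hy hlt.ne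
  have hdiv := diffBit_div_eq (m := m) hx hy
  rw [← hd] at hdiv
  have hx2 : x / 2 ^ d = 2 * (x / 2 ^ (d + 1)) + x / 2 ^ d % 2 := by
    rw [pow_succ, ← Nat.div_div_eq_div_mul]; omega
  have hy2 : y / 2 ^ d = 2 * (y / 2 ^ (d + 1)) + y / 2 ^ d % 2 := by
    rw [pow_succ, ← Nat.div_div_eq_div_mul]; omega
  have hle : x / 2 ^ d ≤ y / 2 ^ d := Nat.div_le_div_right hlt.le
  have htx : x.testBit d = decide (x / 2 ^ d % 2 = 1) := Nat.testBit_eq_decide_div_mod_eq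
  have hty : y.testBit d = decide (y / 2 ^ d % 2 = 1) := Nat.testBit_eq_decide_div_mod_eq
  rcases Bool.eq_false_or_eq_true (x.testBit d) with h | h
  · exfalso
    have hxm : x / 2 ^ d % 2 = 1 := by rw [htx] at h; simpa using h
    have hyf : y.testBit d = false := by
      rcases Bool.eq_false_or_eq_true (y.testBit d) with h2 | h2
      · rw [h, h2] at hne; exact absurd rfl hne
      · exact h2
    have hym : y / 2 ^ d % 2 = 0 := by
      rw [hty] at hyf
      simp only [decide_eq_false_iff_not] at hyf
      omega
    omega
  · refine ⟨h, ?_⟩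
    rcases Bool.eq_false_or_eq_true (y.testBit d) with h2 | h2
    · exact h2
    · rw [h, h2] at hne; exact absurd rfl hne

noncomputable def triColor (m x y z : ℕ) : ℕ :=
  if y.testBit (diffBit m x z) = z.testBit (diffBit m x z) then
    diffBit m x z * m + diffBit m y z
  else
    m ^ 2 + (diffBit m x z * m + diffBit m x y)

def partOf (m t x : ℕ) : Fin 3 :=
  if x.testBit (t % m ^ 2 / m) = decide (m ^ 2 ≤ t) then 0
  else if x.testBit (t % m) then 1 else 2

lemma encode_lt {m i j : ℕ} (hi : i < m) (hj : j < m) : i * m + j < m ^ 2 := by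
  calc i * m + j < (i + 1) * m := by rw [add_mul, one_mul]; omega
    _ ≤ m * m := Nat.mul_le_mul_right m hi
    _ = m ^ 2 := (sq m).symm

lemma decode_i {m i j : ℕ} (hi : i < m) (hj : j < m) (b : ℕ) :
    (b * m ^ 2 + (i * m + j)) % m ^ 2 / m = i := by
  have hm : 0 < m := lt_of_le_of_lt (Nat.zero_le j) hj
  rw [add_comm, Nat.add_mul_mod_self_right, Nat.mod_eq_of_lt (encode_lt hi hj),
    add_comm (i * m) j, Nat.add_mul_div_right _ _ hm, Nat.div_eq_of_lt hj, zero_add]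

lemma decode_j {m i j : ℕ} (hi : i < m) (hj : j < m) (b : ℕ) :
    (b * m ^ 2 + (i * m + j)) % m = j := by
  have : b * m ^ 2 + (i * m + j) = j + (b * m + i) * m := by ring
  rw [this, Nat.add_mul_mod_self_right, Nat.mod_eq_of_lt hj]

lemma triColor_lt {m x y z : ℕ} (hx : x < 2 ^ m) (hy : y < 2 ^ m) (hz : z < 2 ^ m)
    (hxy : x < y) (hyz : y < z) : triColor m x y z < 2 * m ^ 2 := by
  have hxz : x < z := hxy.trans hyz
  have h1 := diffBit_lt hx hz hxz.ne
  have h2 := diffBit_lt hy hz hyz.ne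
  have h3 := diffBit_lt hx hy hxy.ne
  unfold triColor
  split
  · have := encode_lt h1 h2; omega
  · have := encode_lt h1 h3; omega

lemma triColor_part {m x y z : ℕ} (hx : x < 2 ^ m) (hy : y < 2 ^ m) (hz : z < 2 ^ m)
    (hxy : x < y) (hyz : y < z) :
    partOf m (triColor m x y z) x ≠ partOf m (triColor m x y z) y ∧
    partOf m (triColor m x y z) x ≠ partOf m (triColor m x y z) z ∧
    partOf m (triColor m x y z) y ≠ partOf m (triColor m x y z) z := by
  have hxz : x < z := hxy.trans hyz
  obtain ⟨hbx, hbz⟩ := diffBit_bits hx hz hxz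
  have hi := diffBit_lt hx hz hxz.ne
  by_cases hcase : y.testBit (diffBit m x z) = z.testBit (diffBit m x z)
  · -- singleton is x (bit false at i); y,z split at j = diffBit m y z
    have htri : triColor m x y z = diffBit m x z * m + diffBit m y z := by
      unfold triColor; rw [if_pos hcase]
    have hj := diffBit_lt hy hz hyz.ne
    have hjne := diffBit_spec hy hz hyz.ne
    have hyi : y.testBit (diffBit m x z) = true := by rw [hcase, hbz]
    have e1 : (diffBit m x z * m + diffBit m y z) % m ^ 2 / m = diffBit m x z := by
      have := decode_i hi hj 0; simpa using this
    have e2 : (diffBit m x z * m + diffBit m y z) % m = diffBit m y z := by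
      have := decode_j hi hj 0; simpa using this
    have e3 : decide (m ^ 2 ≤ diffBit m x z * m + diffBit m y z) = false := by
      simp [Nat.not_le.2 (encode_lt hi hj)]
    have hPx : partOf m (triColor m x y z) x = 0 := by
      rw [htri]; unfold partOf; rw [e1, e2, e3, hbx]; simp
    have hPy : partOf m (triColor m x y z) y =
        (if y.testBit (diffBit m y z) then 1 else 2) := by
      rw [htri]; unfold partOf; rw [e1, e2, e3, hyi]; simp
    have hPz : partOf m (triColor m x y z) z =
        (if z.testBit (diffBit m y z) then 1 else 2) := by
      rw [htri]; unfold partOf; rw [e1, e2, e3, hbz]; simp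
    rw [hPx, hPy, hPz]
    rcases Bool.eq_false_or_eq_true (y.testBit (diffBit m y z)) with h | h <;>
      rcases Bool.eq_false_or_eq_true (z.testBit (diffBit m y z)) with h2 | h2 <;>
        rw [h, h2] at hjne ⊢ <;> simp_all <;> decide
  · -- singleton is z (bit true at i); x,y split at j = diffBit m x y
    have htri : triColor m x y z = m ^ 2 + (diffBit m x z * m + diffBit m x y) := by
      unfold triColor; rw [if_neg hcase]
    have hj := diffBit_lt hx hy hxy.ne
    have hjne := diffBit_spec hx hy hxy.ne
    have hyi : y.testBit (diffBit m x z) = false := by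
      rcases Bool.eq_false_or_eq_true (y.testBit (diffBit m x z)) with h | h
      · rw [h, hbz] at hcase; exact absurd rfl hcase
      · exact h
    have e1 : (m ^ 2 + (diffBit m x z * m + diffBit m x y)) % m ^ 2 / m = diffBit m x z := by
      have := decode_i hi hj 1; simpa using this
    have e2 : (m ^ 2 + (diffBit m x z * m + diffBit m x y)) % m = diffBit m x y := by
      have := decode_j hi hj 1; simpa using this
    have e3 : decide (m ^ 2 ≤ m ^ 2 + (diffBit m x z * m + diffBit m x y)) = true := by
      simp
    have hPz : partOf m (triColor m x y z) z = 0 := by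
      rw [htri]; unfold partOf; rw [e1, e2, e3, hbz]; simp
    have hPx : partOf m (triColor m x y z) x =
        (if x.testBit (diffBit m x y) then 1 else 2) := by
      rw [htri]; unfold partOf; rw [e1, e2, e3, hbx]; simp
    have hPy : partOf m (triColor m x y z) y =
        (if y.testBit (diffBit m x y) then 1 else 2) := by
      rw [htri]; unfold partOf; rw [e1, e2, e3, hyi]; simp
    rw [hPx, hPy, hPz]
    rcases Bool.eq_false_or_eq_true (x.testBit (diffBit m x y)) with h | h <;>
      rcases Bool.eq_false_or_eq_true (y.testBit (diffBit m x y)) with h2 | h2 <;>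
        rw [h, h2] at hjne ⊢ <;> simp_all <;> decide

lemma exists_sorted {α : Type*} [DecidableEq α] [LinearOrder α] {s : Finset α} (h : s.card = 3) :
    ∃ x y z : α, x < y ∧ y < z ∧ s = {x, y, z} := by
  let f := s.orderIsoOfFin h
  refine ⟨(f 0 : α), (f 1 : α), (f 2 : α), ?_, ?_, ?_⟩
  · exact Subtype.coe_lt_coe.2 (f.lt_iff_lt.2 (by decide))
  · exact Subtype.coe_lt_coe.2 (f.lt_iff_lt.2 (by decide))
  · ext a
    simp only [Finset.mem_insert, Finset.mem_singleton]
    constructor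
    · intro ha
      obtain ⟨k, hk⟩ : ∃ k, f k = ⟨a, ha⟩ := ⟨f.symm ⟨a, ha⟩, f.apply_symm_apply _⟩
      fin_cases k
      · exact Or.inl (congrArg Subtype.val hk).symm
      · exact Or.inr (Or.inl (congrArg Subtype.val hk).symm)
      · exact Or.inr (Or.inr (congrArg Subtype.val hk).symm)
    · intro ha
      rcases ha with rfl | rfl | rfl
      · exact (f 0).2
      · exact (f 1).2
      · exact (f 2).2

theorem coloring_exists (n : ℕ) (hn : 2 ≤ n) :
    ∃ c : Finset (Fin n) → Fin (2 * Nat.clog 2 n ^ 2),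
      ∀ i, ∃ P : Fin n → Fin 3, ∀ s : Finset (Fin n), s.card = 3 → c s = i →
        ∀ j : Fin 3, (s.filter fun x => P x = j).card = 1 := by
  set m := Nat.clog 2 n with hm
  have hm0 : 0 < m := Nat.clog_pos (by norm_num) hn
  have hbound : ∀ x : Fin n, x.val < 2 ^ m :=
    fun x => lt_of_lt_of_le x.isLt (Nat.le_pow_clog (by norm_num) n)
  set f : Finset (Fin n) → ℕ := fun s =>
    if h : ∃ x y z : Fin n, x < y ∧ y < z ∧ s = {x, y, z} then
      triColor m h.choose.val h.choose_spec.choose.val h.choose_spec.choose_spec.choose.val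
    else 0 with hf
  have hflt : ∀ s, f s < 2 * m ^ 2 := by
    intro s
    rw [hf]
    dsimp only
    split
    case isTrue h =>
      obtain ⟨h1, h2, -⟩ := h.choose_spec.choose_spec.choose_spec
      exact triColor_lt (hbound _) (hbound _) (hbound _) h1 h2
    case isFalse h => positivity
  refine ⟨fun s => ⟨f s, hflt s⟩, ?_⟩
  intro i
  refine ⟨fun x => partOf m i.val x.val, ?_⟩
  intro s hs hcs j
  obtain ⟨x, y, z, hxy, hyz, hset⟩ := exists_sorted hs
  have hex : ∃ x y z : Fin n, x < y ∧ y < z ∧ s = {x, y, z} := ⟨x, y, z, hxy, hyz, hset⟩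
  obtain ⟨h1, h2, hset'⟩ := hex.choose_spec.choose_spec.choose_spec
  set x' := hex.choose
  set y' := hex.choose_spec.choose
  set z' := hex.choose_spec.choose_spec.choose
  have hval : i.val = triColor m x'.val y'.val z'.val := by
    have : f s = triColor m x'.val y'.val z'.val := by
      rw [hf]; dsimp only; rw [dif_pos hex]
    rw [← hcs]; exact this
  set P : Fin n → Fin 3 := fun a => partOf m i.val a.val with hP
  have hparts := triColor_part (hbound x') (hbound y') (hbound z') h1 h2
  rw [← hval] at hparts
  obtain ⟨hab, hac, hbc⟩ := hparts
  have hPxy : P x' ≠ P y' := hab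
  have hPxz : P x' ≠ P z' := hac
  have hPyz : P y' ≠ P z' := hbc
  have hmem : ∀ a : Fin n, a ∈ s ↔ (a = x' ∨ a = y' ∨ a = z') := by
    intro a
    rw [hset']
    simp only [Finset.mem_insert, Finset.mem_singleton]
    exact Iff.rfl
  have huniq : ∀ a ∈ s, ∀ b ∈ s, P a = P b → a = b := by
    intro a ha b hb hab2
    rw [hmem] at ha hb
    rcases ha with rfl | rfl | rfl <;> rcases hb with rfl | rfl | rfl <;>
      first
        | rfl
        | (exact absurd hab2 (by assumption))
        | (exact absurd hab2.symm (by assumption))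
  have cover : j = P x' ∨ j = P y' ∨ j = P z' := by
    have v1 : (P x').val ≠ (P y').val := fun h => hPxy (Fin.val_injective h)
    have v2 : (P x').val ≠ (P z').val := fun h => hPxz (Fin.val_injective h)
    have v3 : (P y').val ≠ (P z').val := fun h => hPyz (Fin.val_injective h)
    have b0 := j.isLt
    have b1 := (P x').isLt
    have b2 := (P y').isLt
    have b3 := (P z').isLt
    have : j.val = (P x').val ∨ j.val = (P y').val ∨ j.val = (P z').val := by omega
    rcases this with h | h | h
    · exact Or.inl (Fin.val_injective h)
    · exact Or.inr (Or.inl (Fin.val_injective h))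
    · exact Or.inr (Or.inr (Fin.val_injective h))
  have hsingle : ∀ w : Fin n, w ∈ s → P w = j →
      (s.filter fun a => P a = j) = {w} := by
    intro w hw hPw
    apply Finset.eq_singleton_iff_unique_mem.2
    refine ⟨Finset.mem_filter.2 ⟨hw, hPw⟩, ?_⟩
    intro b hb
    obtain ⟨hbs, hbj⟩ := Finset.mem_filter.1 hb
    exact huniq b hbs w hw (by rw [hbj, hPw])
  have hxs : x' ∈ s := (hmem x').2 (Or.inl rfl)
  have hys : y' ∈ s := (hmem y').2 (Or.inr (Or.inl rfl))
  have hzs : z' ∈ s := (hmem z').2 (Or.inr (Or.inr rfl))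
  rcases cover with hj | hj | hj
  · rw [hsingle x' hxs hj.symm, Finset.card_singleton]
  · rw [hsingle y' hys hj.symm, Finset.card_singleton]
  · rw [hsingle z' hzs hj.symm, Finset.card_singleton]

lemma tripartite_no_berge {n K : ℕ} (c : Finset (Fin n) → Fin K) (i : Fin K)
    (P : Fin n → Fin 3)
    (hP : ∀ s : Finset (Fin n), s.card = 3 → c s = i →
      ∀ j : Fin 3, (s.filter fun x => P x = j).card = 1) :
    ¬ BergeIn K4 {s : Finset (Fin n) | s.card = 3 ∧ c s = i} := by
  rintro ⟨φ, hφ, ψ, hψ, hmem, hcov⟩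
  have key : Function.Injective fun x : Fin 4 => P (φ x) := by
    intro x y hxy2
    simp only at hxy2
    by_contra hne
    have hadj : K4.Adj x y := by simpa [K4] using hne
    have hedge : s(x, y) ∈ K4.edgeSet := (SimpleGraph.mem_edgeSet K4).2 hadj
    obtain ⟨hcard, hcol⟩ := hmem ⟨s(x, y), hedge⟩
    have hx : φ x ∈ ψ ⟨s(x, y), hedge⟩ := hcov ⟨s(x, y), hedge⟩ x (by simp)
    have hy : φ y ∈ ψ ⟨s(x, y), hedge⟩ := hcov ⟨s(x, y), hedge⟩ y (by simp)
    have hcardf := hP (ψ ⟨s(x, y), hedge⟩) hcard hcol (P (φ x))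
    have hsub : ({φ x, φ y} : Finset (Fin n)) ⊆
        (ψ ⟨s(x, y), hedge⟩).filter fun a => P a = P (φ x) := by
      intro a ha
      rcases Finset.mem_insert.1 ha with rfl | ha
      · exact Finset.mem_filter.2 ⟨hx, rfl⟩
      · rw [Finset.mem_singleton] at ha; subst ha
        exact Finset.mem_filter.2 ⟨hy, hxy2.symm⟩
    have h2 : 2 ≤ ((ψ ⟨s(x, y), hedge⟩).filter fun a => P a = P (φ x)).card := by
      have hpair : ({φ x, φ y} : Finset (Fin n)).card = 2 :=
        Finset.card_pair (fun h => hne (hφ h))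
      calc 2 = ({φ x, φ y} : Finset (Fin n)).card := hpair.symm
        _ ≤ _ := Finset.card_le_card hsub
    omega
  have hle := Fintype.card_le_of_injective _ key
  simp at hle

lemma seqLemma {n k : ℕ} (hk : 0 < k) (c : Finset (Fin n) → Fin k) :
    ∀ (t : ℕ) (S : Finset (Fin n)), (k + 1) ^ t ≤ S.card →
      ∃ (v : Fin t → Fin n) (d : Fin t → Fin k),
        (∀ i, v i ∈ S) ∧ Function.Injective v ∧
        ∀ i j : Fin t, i < j → c {v i, v j} = d i := by
  intro t
  induction t with
  | zero =>
    intro S _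
    exact ⟨Fin.elim0, Fin.elim0, fun i => i.elim0, fun i => i.elim0, fun i => i.elim0⟩
  | succ t ih =>
    intro S hS
    have hpow : 0 < (k + 1) ^ t := pow_pos (by omega) t
    have hpow1 : 0 < (k + 1) ^ (t + 1) := pow_pos (by omega) (t + 1)
    have hS0 : 0 < S.card := lt_of_lt_of_le hpow1 hS
    obtain ⟨v₀, hv₀⟩ := Finset.card_pos.1 hS0
    have hS' : k * (k + 1) ^ t ≤ (S.erase v₀).card := by
      have h1 : (S.erase v₀).card = S.card - 1 := Finset.card_erase_of_mem hv₀
      have h2 : (k + 1) ^ (t + 1) = k * (k + 1) ^ t + (k + 1) ^ t := by ring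
      omega
    have hfib : ∃ d₀ : Fin k,
        (k + 1) ^ t ≤ ((S.erase v₀).filter fun x => c {v₀, x} = d₀).card := by
      by_contra hcon
      push_neg at hcon
      have hsum : (S.erase v₀).card =
          ∑ b : Fin k, ((S.erase v₀).filter fun x => c {v₀, x} = b).card :=
        Finset.card_eq_sum_card_fiberwise (fun x _ => Finset.mem_univ _)
      have hle : ∑ b : Fin k, ((S.erase v₀).filter fun x => c {v₀, x} = b).card ≤
          ∑ _b : Fin k, ((k + 1) ^ t - 1) :=
        Finset.sum_le_sum fun b _ => by have := hcon b; omega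
      rw [Finset.sum_const, Finset.card_univ, Fintype.card_fin, smul_eq_mul] at hle
      have hmul : k * ((k + 1) ^ t - 1) + k * 1 = k * (k + 1) ^ t := by
        rw [← Nat.mul_add]
        congr 1
        omega
      omega
    obtain ⟨d₀, hd₀⟩ := hfib
    obtain ⟨v', d', hvS, hvinj, hcol⟩ := ih _ hd₀
    have hvT : ∀ i, v' i ∈ (S.erase v₀).filter fun x => c {v₀, x} = d₀ := hvS
    have hvS' : ∀ i, v' i ∈ S.erase v₀ := fun i => (Finset.mem_filter.1 (hvT i)).1
    have hvcol : ∀ i, c {v₀, v' i} = d₀ := fun i => (Finset.mem_filter.1 (hvT i)).2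
    have hvne : ∀ i, v' i ≠ v₀ := fun i => Finset.ne_of_mem_erase (hvS' i)
    refine ⟨Fin.cases v₀ v', Fin.cases d₀ d', ?_, ?_, ?_⟩
    · intro i
      refine Fin.cases ?_ ?_ i
      · simpa using hv₀
      · intro j
        simpa using Finset.mem_of_mem_erase (hvS' j)
    · intro a
      refine Fin.cases ?_ ?_ a
      · intro b
        refine Fin.cases ?_ ?_ b
        · intro _; rfl
        · intro b' h
          simp only [Fin.cases_zero, Fin.cases_succ] at h
          exact absurd h.symm (hvne b')
      · intro a' b
        refine Fin.cases ?_ ?_ b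
        · intro h
          simp only [Fin.cases_zero, Fin.cases_succ] at h
          exact absurd h (hvne a')
        · intro b' h
          simp only [Fin.cases_zero, Fin.cases_succ] at h
          exact congrArg Fin.succ (hvinj h)
    · intro a
      refine Fin.cases ?_ ?_ a
      · intro b
        refine Fin.cases ?_ ?_ b
        · intro h; exact absurd h (lt_irrefl _)
        · intro b' _
          simp only [Fin.cases_zero, Fin.cases_succ]
          exact hvcol b'
      · intro a' b
        refine Fin.cases ?_ ?_ b
        · intro h; exact absurd h (Fin.not_lt_zero _)
        · intro b' h
          simp only [Fin.cases_zero, Fin.cases_succ]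
          exact hcol a' b' (Fin.succ_lt_succ_iff.1 h)

lemma prop_at (k : ℕ) (hk : 0 < k) :
    BergeRamseyProp K4 3 k ((k + 1) ^ (3 * k + 1) + 1) := by
  intro c
  set L : Fin ((k + 1) ^ (3 * k + 1) + 1) := Fin.last ((k + 1) ^ (3 * k + 1)) with hL
  have hScard : (k + 1) ^ (3 * k + 1) ≤ (Finset.univ.erase L).card := by
    rw [Finset.card_erase_of_mem (Finset.mem_univ _), Finset.card_univ, Fintype.card_fin]
    omega
  obtain ⟨v, d, hvS, hvinj, hcol⟩ :=
    seqLemma hk (fun p => c (insert L p)) (3 * k + 1) (Finset.univ.erase L) hScard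
  have hpig : ∃ co : Fin k, 3 < (Finset.univ.filter fun i : Fin (3 * k + 1) => d i = co).card := by
    apply Fintype.exists_lt_card_fiber_of_mul_lt_card
    simp only [Fintype.card_fin]
    omega
  obtain ⟨co, hco⟩ := hpig
  obtain ⟨F, hFsub, hFcard⟩ := Finset.exists_subset_card_eq (n := 4) hco
  have hFcard4 : F.card = 4 := hFcard
  let g := F.orderIsoOfFin hFcard4
  have ha_mono : StrictMono fun x : Fin 4 => ((g x : Fin (3 * k + 1))) :=
    fun x y h => Subtype.coe_lt_coe.2 (g.lt_iff_lt.2 h)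
  set a : Fin 4 → Fin (3 * k + 1) := fun x => (g x : Fin (3 * k + 1)) with haa
  have had : ∀ x, d (a x) = co := fun x => (Finset.mem_filter.1 (hFsub (g x).2)).2
  set w : Fin 4 → Fin ((k + 1) ^ (3 * k + 1) + 1) := fun x => v (a x) with hw
  have hwinj : Function.Injective w := fun x y h => ha_mono.injective (hvinj h)
  have hwne : ∀ x, w x ≠ L := fun x => Finset.ne_of_mem_erase (hvS (a x))
  have hpairco : ∀ x y : Fin 4, x ≠ y → c (insert L {w x, w y}) = co := by
    intro x y hxy
    rcases lt_or_gt_of_ne hxy with h | h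
    · have h1 := hcol (a x) (a y) (ha_mono h)
      rw [had x] at h1
      exact h1
    · have h1 := hcol (a y) (a x) (ha_mono h)
      rw [had y] at h1
      rw [Finset.pair_comm]
      exact h1
  have hwcard : ∀ x y : Fin 4, x ≠ y →
      (insert L ({w x, w y} : Finset (Fin ((k + 1) ^ (3 * k + 1) + 1)))).card = 3 := by
    intro x y hxy
    have hL : L ∉ ({w x, w y} : Finset (Fin ((k + 1) ^ (3 * k + 1) + 1))) := by
      intro hmem
      rcases Finset.mem_insert.1 hmem with h | h
      · exact hwne x h.symm
      · rw [Finset.mem_singleton] at h; exact hwne y h.symm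
    rw [Finset.card_insert_of_notMem hL, Finset.card_pair (fun h => hxy (hwinj h))]
  -- edge representation
  have hrep : ∀ e : K4.edgeSet, ∃ x y : Fin 4, x ≠ y ∧ (e : Sym2 (Fin 4)) = s(x, y) := by
    rintro ⟨e, he⟩
    induction e using Sym2.ind with
    | _ x y =>
      refine ⟨x, y, ?_, rfl⟩
      have : K4.Adj x y := (SimpleGraph.mem_edgeSet K4).1 he
      simpa [K4] using this
  have hfilter : ∀ x y : Fin 4, (Finset.univ.filter fun z : Fin 4 => z ∈ s(x, y)) = {x, y} := by
    intro x y
    ext z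
    simp [Sym2.mem_iff]
  have himg : ∀ x y : Fin 4, ({x, y} : Finset (Fin 4)).image w = {w x, w y} := by
    intro x y
    simp [Finset.image_insert]
  refine ⟨co, w, hwinj,
    fun e => insert L ((Finset.univ.filter fun x : Fin 4 => x ∈ (e : Sym2 (Fin 4))).image w),
    ?_, ?_, ?_⟩
  · -- injectivity of ψ
    intro e e' heq
    dsimp only at heq
    obtain ⟨x, y, hxy, hexy⟩ := hrep e
    obtain ⟨x', y', hxy', hexy'⟩ := hrep e'
    rw [hexy, hexy', hfilter, hfilter, himg, himg] at heq
    have hL1 : L ∉ ({w x, w y} : Finset (Fin ((k + 1) ^ (3 * k + 1) + 1))) := by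
      intro hmem
      rcases Finset.mem_insert.1 hmem with h | h
      · exact hwne x h.symm
      · rw [Finset.mem_singleton] at h; exact hwne y h.symm
    have hL2 : L ∉ ({w x', w y'} : Finset (Fin ((k + 1) ^ (3 * k + 1) + 1))) := by
      intro hmem
      rcases Finset.mem_insert.1 hmem with h | h
      · exact hwne x' h.symm
      · rw [Finset.mem_singleton] at h; exact hwne y' h.symm
    have him : ({w x, w y} : Finset (Fin ((k + 1) ^ (3 * k + 1) + 1))) = {w x', w y'} := by
      have h1 := congrArg (fun s => Finset.erase s L) heq
      rwa [Finset.erase_insert hL1, Finset.erase_insert hL2] at h1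
    have hpair : ({x, y} : Finset (Fin 4)) = {x', y'} :=
      Finset.image_injective hwinj (by rw [himg, himg]; exact him)
    have hsym : s(x, y) = s(x', y') := by
      have hx : x = x' ∨ x = y' := by
        have : x ∈ ({x', y'} : Finset (Fin 4)) := hpair ▸ Finset.mem_insert_self x {y}
        simpa using this
      have hy : y = x' ∨ y = y' := by
        have : y ∈ ({x', y'} : Finset (Fin 4)) := by
          rw [← hpair]
          simp
        simpa using this
      have hx' : x' = x ∨ x' = y := by
        have : x' ∈ ({x, y} : Finset (Fin 4)) := by
          rw [hpair]
          simp
        simpa using this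
      rw [Sym2.eq_iff]
      rcases hx with rfl | rfl
      · left
        refine ⟨rfl, ?_⟩
        rcases hy with rfl | h
        · exact absurd rfl hxy
        · exact h
      · right
        refine ⟨rfl, ?_⟩
        rcases hy with h | rfl
        · exact h
        · exact absurd rfl hxy
    apply Subtype.ext
    rw [hexy, hexy', hsym]
  · -- membership in the color class
    intro e
    dsimp only
    obtain ⟨x, y, hxy, hexy⟩ := hrep e
    rw [hexy, hfilter, himg]
    exact ⟨hwcard x y hxy, hpairco x y hxy⟩
  · -- covering
    intro e z hz
    dsimp only
    exact Finset.mem_insert_of_mem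
      (Finset.mem_image.2 ⟨z, Finset.mem_filter.2 ⟨Finset.mem_univ _, hz⟩, rfl⟩)

/-- For every `n ≥ 2` there is a coloring of the 3-element subsets of an `n`-set with at most
`2⌈log₂ n⌉²` colors in which every color class is 3-partite (every 3-set of a color has
exactly one element in each part of a tripartition associated to the color); in particular no
color class contains a Berge-`K₄`. Consequently, `R₃(𝓑(K₄), k) > 2^⌊√(k/2)⌋` for all `k ≥ 2`. -/
theorem tripartite_coloring_and_K4_lower_bound :
    (∀ n : ℕ, 2 ≤ n →
      ∃ c : Finset (Fin n) → Fin (2 * Nat.clog 2 n ^ 2),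
        (∀ i, ∃ P : Fin n → Fin 3, ∀ s : Finset (Fin n), s.card = 3 → c s = i →
          ∀ j : Fin 3, (s.filter fun x => P x = j).card = 1) ∧
        (∀ i, ¬ BergeIn K4 {s : Finset (Fin n) | s.card = 3 ∧ c s = i})) ∧
    ∀ k : ℕ, 2 ≤ k → 2 ^ Nat.sqrt (k / 2) < bergeRamsey K4 3 k := by
  constructor
  · intro n hn
    obtain ⟨c, hc1⟩ := coloring_exists n hn
    refine ⟨c, hc1, ?_⟩
    intro i
    obtain ⟨P, hP⟩ := hc1 i
    exact tripartite_no_berge c i P hP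
  · intro k hk
    have hk0 : 0 < k := by omega
    have hne : {n | BergeRamseyProp K4 3 k n}.Nonempty :=
      ⟨(k + 1) ^ (3 * k + 1) + 1, prop_at k hk0⟩
    have hmem := Nat.sInf_mem hne
    have hlb : ∀ n, BergeRamseyProp K4 3 k n → 2 ^ Nat.sqrt (k / 2) < n := by
      intro n hp
      by_contra hcon
      push_neg at hcon
      rcases le_or_gt n 1 with h1 | h1
      · obtain ⟨i, φ, hφ, -⟩ := hp (fun _ => ⟨0, hk0⟩)
        have hcard := Fintype.card_le_of_injective φ hφ
        simp only [Fintype.card_fin] at hcard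
        omega
      · obtain ⟨c, hc1⟩ := coloring_exists n h1
        have hcount : 2 * Nat.clog 2 n ^ 2 ≤ k := by
          have h2 : Nat.clog 2 n ≤ Nat.sqrt (k / 2) := by
            calc Nat.clog 2 n ≤ Nat.clog 2 (2 ^ Nat.sqrt (k / 2)) :=
                  Nat.clog_mono_right 2 hcon
              _ = Nat.sqrt (k / 2) := Nat.clog_pow 2 _ (by norm_num)
          have h3 : Nat.sqrt (k / 2) ^ 2 ≤ k / 2 := Nat.sqrt_le' _
          have h4 : Nat.clog 2 n ^ 2 ≤ Nat.sqrt (k / 2) ^ 2 := Nat.pow_le_pow_left h2 2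
          omega
        obtain ⟨i, hB⟩ := hp (fun s => Fin.castLE hcount (c s))
        obtain ⟨φ, hφ, ψ, hψ, hmemA, hcov⟩ := hB
        have hedge : s((0 : Fin 4), 1) ∈ K4.edgeSet :=
          (SimpleGraph.mem_edgeSet K4).2 (by simp [K4])
        obtain ⟨hcard0, hcol0⟩ := hmemA ⟨_, hedge⟩
        have hBc : BergeIn K4 {s : Finset (Fin n) | s.card = 3 ∧ c s = c (ψ ⟨_, hedge⟩)} := by
          refine ⟨φ, hφ, ψ, hψ, ?_, hcov⟩
          intro e
          obtain ⟨hcard', hcol'⟩ := hmemA e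
          refine ⟨hcard', ?_⟩
          have hcc : Fin.castLE hcount (c (ψ e)) =
              Fin.castLE hcount (c (ψ ⟨_, hedge⟩)) := by
            rw [hcol']
            exact hcol0.symm
          exact Fin.castLE_injective hcount hcc
        obtain ⟨P, hP⟩ := hc1 (c (ψ ⟨_, hedge⟩))
        exact tripartite_no_berge c _ P hP hBc
    exact hlb _ hmem
end

section
/- For every real ε with 0 < ε < 1/4 and every integer k ≥ 1, R(K_4^*, k) ≤ (1+ε)^k · k!/ε, where R(K_4^*, k) is the k-color Ramsey number of the family K_4^*. -/
set_option maxRecDepth 8000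

open SimpleGraph

/-- `K₄` minus the edge `{2,3}` with a pendant edge `{2,4}` attached at the degree-2 vertex `2`. -/
def K4ePendant : SimpleGraph (Fin 5) :=
  SimpleGraph.fromEdgeSet {s(0, 1), s(0, 2), s(0, 3), s(1, 2), s(1, 3), s(2, 4)}

/-- A triangle `{0,1,2}` with pendant edges to new vertices `3`, `4`, `5`. -/
def triPendants : SimpleGraph (Fin 6) :=
  SimpleGraph.fromEdgeSet {s(0, 1), s(1, 2), s(0, 2), s(0, 3), s(1, 4), s(2, 5)}

/-- The edge-coloring `c` of `K_n` contains a copy of the graph `F` all of whose edges have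
color `i`. -/
def MonoCopy {W : Type} (F : SimpleGraph W) {n k : ℕ} (c : Sym2 (Fin n) → Fin k)
    (i : Fin k) : Prop :=
  ∃ f : W → Fin n, Function.Injective f ∧ ∀ x y : W, F.Adj x y → c s(f x, f y) = i

/-- Every `k`-coloring of the edges of `K_n` contains a monochromatic member of the family
`K₄* = {K₄, K4ePendant, triPendants}`. -/
def K4starRamseyProp (k n : ℕ) : Prop :=
  ∀ c : Sym2 (Fin n) → Fin k, ∃ i : Fin k,
    MonoCopy K4 c i ∨ MonoCopy K4ePendant c i ∨ MonoCopy triPendants c i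

/-- `R(K₄*, k)`. -/
noncomputable def K4starRamsey (k : ℕ) : ℕ := sInf {n | K4starRamseyProp k n}

namespace K4U


def T3 : ℕ → ℕ
  | 0 => 2
  | m+1 => (m+1) * (T3 m - 1) + 2

def Wstep (a u : ℕ) : ℕ := u + min (a - 1) ((u+1)/2)

def U (a t : ℕ) : ℕ → ℕ
  | 0 => t
  | i+1 => Wstep a (U a t i)

def W : ℕ → ℕ
  | 0 => 2
  | 1 => 3
  | m+2 => U (W (m+1)) (T3 (m+2)) (m+2)

lemma chain (s u a : ℕ) (h : u + min (a-1) ((u+1)/2) ≤ s) :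
    u ≤ s - min (a-1) (s/3) := by omega

lemma T3_ge (m : ℕ) (hm : 2 ≤ m) : 2*m + 2 ≤ T3 m := by
  induction m with
  | zero => omega
  | succ m IH =>
    rcases Nat.lt_or_ge m 2 with h | h
    · interval_cases m
      · omega
      · have : T3 (1+1) = 6 := by decide
        omega
    · have h1 := IH h
      have e : T3 (m+1) = (m+1) * (T3 m - 1) + 2 := rfl
      have h2 : (m+1)*(2*m+1) ≤ (m+1)*(T3 m - 1) := Nat.mul_le_mul_left _ (by omega)
      have h3 : 2*m+2 ≤ (m+1)*(2*m+1) := by nlinarith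
      omega

lemma W_ge_two (m : ℕ) : 2 ≤ W m := by
  rcases m with _ | _ | m
  · decide
  · decide
  · show 2 ≤ U (W (m+1)) (T3 (m+2)) (m+2)
    have h1 : 2 ≤ T3 (m+2) := by have := T3_ge (m+2) (by omega); omega
    have h2 : ∀ i, T3 (m+2) ≤ U (W (m+1)) (T3 (m+2)) i := by
      intro i; induction i with
      | zero => simp [U]
      | succ i IH => simp only [U, Wstep]; omega
    have := h2 (m+2); omega

lemma U_ge (a t : ℕ) (ha : 2 ≤ a) (ht : 1 ≤ t) : ∀ i, t + i ≤ U a t i := by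
  intro i; induction i with
  | zero => simp [U]
  | succ i IH => simp only [U, Wstep]; omega

lemma W_ge (k : ℕ) (hk : 2 ≤ k) : 2*k + 4 ≤ W k := by
  rcases k with _ | _ | m
  · omega
  · omega
  · show 2*(m+2) + 4 ≤ U (W (m+1)) (T3 (m+2)) (m+2)
    have h1 := T3_ge (m+2) (by omega)
    have h2 := U_ge (W (m+1)) (T3 (m+2)) (W_ge_two (m+1)) (by omega) (m+2)
    omega

lemma U_le (a t : ℕ) : ∀ i, 4 * U a t (i+2) ≤ 9*t + 5 + 4*(i*(a-1)) := by
  intro i; induction i with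
  | zero =>
    have e1 : U a t 1 = Wstep a t := rfl
    have e2 : U a t (0+2) = Wstep a (Wstep a t) := rfl
    simp only [Wstep] at e1 e2
    omega
  | succ i IH =>
    have e : U a t (i+1+2) = Wstep a (U a t (i+2)) := rfl
    simp only [Wstep] at e
    have e2 : (i+1)*(a-1) = i*(a-1) + (a-1) := by ring
    omega

lemma T3_le (m : ℕ) (hm : 4 ≤ m) : 4 * T3 m ≤ 11 * Nat.factorial m := by
  induction m with
  | zero => omega
  | succ m IH =>
    rcases Nat.lt_or_ge m 4 with h | h
    · have : m = 3 := by omega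
      subst this
      decide
    · have hIH := IH h
      have h1 : 2*m+2 ≤ T3 m := T3_ge m (by omega)
      have e : T3 (m+1) = (m+1) * (T3 m - 1) + 2 := rfl
      have e2 : 4*((m+1)*(T3 m - 1)+2) = (m+1)*(4*(T3 m - 1)) + 8 := by ring
      have key : 4*(T3 m - 1) + 4 ≤ 11 * Nat.factorial m := by omega
      have h3 : (m+1)*(4*(T3 m - 1) + 4) ≤ (m+1)*(11*Nat.factorial m) :=
        Nat.mul_le_mul_left _ key
      have h4 : (m+1)*(4*(T3 m - 1) + 4) = (m+1)*(4*(T3 m - 1)) + 4*(m+1) := by ring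
      have h5 : 11 * Nat.factorial (m+1) = (m+1)*(11*Nat.factorial m) := by
        rw [Nat.factorial_succ]; ring
      omega

lemma W_le_big : ∀ k, 7 ≤ k → 3 * W k ≤ 7 * k * Nat.factorial k := by
  intro k
  induction k with
  | zero => omega
  | succ k IH =>
    intro hk
    rcases Nat.lt_or_ge k 7 with h | h
    · have : k = 6 := by omega
      subst this
      have h1 : W (6+1) = 80108 := by decide
      have h2 : Nat.factorial (6+1) = 5040 := by decide
      omega
    · have hIH := IH h
      obtain ⟨m, rfl⟩ : ∃ m, k = m + 2 := ⟨k - 2, by omega⟩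
      have hm : 5 ≤ m := by omega
      have hq1 : 1 ≤ Nat.factorial (m+2) := Nat.one_le_iff_ne_zero.mpr (Nat.factorial_ne_zero _)
      set q := Nat.factorial (m+2) with hq
      set X := T3 (m+3) with hX
      set A := W (m+2) with hA
      set Z := (m+1)*(A-1) with hZ
      set G := (m+1)*(7*(m+2)*q) with hG
      set P := (m+3)*q with hP
      set R2 := (m+3)*((m+3)*q) with hR2
      have hU4 : 4 * W (m+3) ≤ 9*X + 5 + 4*Z := by
        have h0 := U_le A X (m+1)
        have e3 : U A X (m+1+2) = U A X (m+3) := by norm_num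
        have e4 : W (m+3) = U A X (m+3) := rfl
        omega
      have hXP : 4 * X ≤ 11 * P := by
        have h0 := T3_le (m+3) (by omega)
        have e5 : Nat.factorial (m+3) = (m+3)*q := by rw [hq, Nat.factorial_succ]
        rw [hP, ← e5]
        omega
      have hZG : 48*Z ≤ 16*G := by
        have h0 : Z ≤ (m+1)*A := Nat.mul_le_mul_left _ (Nat.sub_le _ _)
        have h1 : (m+1)*(3*A) ≤ G := by
          rw [hG]
          exact Nat.mul_le_mul_left _ hIH
        calc 48*Z ≤ 48*((m+1)*A) := by omega
          _ = 16*((m+1)*(3*A)) := by ring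
          _ ≤ 16*G := Nat.mul_le_mul_left _ h1
      have hcoef : 60 + 297*P + 16*G ≤ 112*R2 := by
        have e1 : 297*P = (297*m + 891)*q := by rw [hP]; ring
        have e2 : 16*G = (112*m*m + 336*m + 224)*q := by rw [hG]; ring
        have e3 : 112*R2 = (112*m*m + 672*m + 1008)*q := by rw [hR2]; ring
        rw [e1, e2, e3]
        have h60 : 60 ≤ (39*m - 107)*q := by
          calc 60 ≤ 88*1 := by omega
            _ ≤ (39*m-107)*q := Nat.mul_le_mul (by omega) hq1
        have hsum : (297*m+891)*q + (112*m*m+336*m+224)*q + (39*m-107)*q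
            = (112*m*m + 672*m + 1008)*q := by
          have : (297*m+891) + (112*m*m+336*m+224) + (39*m-107)
              = 112*m*m + 672*m + 1008 := by omega
          calc (297*m+891)*q + (112*m*m+336*m+224)*q + (39*m-107)*q
              = ((297*m+891) + (112*m*m+336*m+224) + (39*m-107))*q := by ring
            _ = (112*m*m + 672*m + 1008)*q := by rw [this]
        omega
      have final : 48 * W (m+3) ≤ 112 * R2 := by omega
      have goal16 : 16*(3*W (m+3)) ≤ 16*(7*R2) := by omega
      have h7 := Nat.le_of_mul_le_mul_left goal16 (by omega : 0 < 16)
      have e5 : Nat.factorial (m+3) = (m+3)*q := by rw [hq, Nat.factorial_succ]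
      calc 3*W (m+3) ≤ 7*R2 := h7
        _ = 7*(m+3)*Nat.factorial (m+3) := by rw [hR2, e5]; ring


variable {n k : ℕ}

lemma copy_K4 {c : Sym2 (Fin n) → Fin k} {i : Fin k} {x y z w : Fin n}
    (h1 : x ≠ y) (h2 : x ≠ z) (h3 : x ≠ w) (h4 : y ≠ z) (h5 : y ≠ w) (h6 : z ≠ w)
    (e1 : c s(x,y) = i) (e2 : c s(x,z) = i) (e3 : c s(x,w) = i)
    (e4 : c s(y,z) = i) (e5 : c s(y,w) = i) (e6 : c s(z,w) = i) :
    MonoCopy K4 c i := by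
  have e1' : c s(y,x) = i := by rw [Sym2.eq_swap]; exact e1
  have e2' : c s(z,x) = i := by rw [Sym2.eq_swap]; exact e2
  have e3' : c s(w,x) = i := by rw [Sym2.eq_swap]; exact e3
  have e4' : c s(z,y) = i := by rw [Sym2.eq_swap]; exact e4
  have e5' : c s(w,y) = i := by rw [Sym2.eq_swap]; exact e5
  have e6' : c s(w,z) = i := by rw [Sym2.eq_swap]; exact e6
  refine ⟨![x,y,z,w], ?_, ?_⟩
  · intro a b hab
    fin_cases a <;> fin_cases b <;> simp_all
  · intro a b hadj
    rw [K4, SimpleGraph.top_adj] at hadj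
    fin_cases a <;> fin_cases b <;> simp_all

lemma copy_K4eP {c : Sym2 (Fin n) → Fin k} {i : Fin k} {x y z w p : Fin n}
    (h1 : x ≠ y) (h2 : x ≠ z) (h3 : y ≠ z)
    (hw : w ≠ x ∧ w ≠ y ∧ w ≠ z) (hp : p ≠ x ∧ p ≠ y ∧ p ≠ z) (hwp : w ≠ p)
    (exy : c s(x,y) = i) (exz : c s(x,z) = i) (eyz : c s(y,z) = i)
    (exw : c s(x,w) = i) (eyw : c s(y,w) = i) (ezp : c s(z,p) = i) :
    MonoCopy K4ePendant c i := by
  obtain ⟨hw1, hw2, hw3⟩ := hw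
  obtain ⟨hp1, hp2, hp3⟩ := hp
  have eyx : c s(y,x) = i := by rw [Sym2.eq_swap]; exact exy
  have ezx : c s(z,x) = i := by rw [Sym2.eq_swap]; exact exz
  have ezy : c s(z,y) = i := by rw [Sym2.eq_swap]; exact eyz
  have ewx : c s(w,x) = i := by rw [Sym2.eq_swap]; exact exw
  have ewy : c s(w,y) = i := by rw [Sym2.eq_swap]; exact eyw
  have epz : c s(p,z) = i := by rw [Sym2.eq_swap]; exact ezp
  refine ⟨![x,y,z,w,p], ?_, ?_⟩
  · intro a b hab
    fin_cases a <;> fin_cases b <;> simp_all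
  · intro a b hadj
    rw [K4ePendant, SimpleGraph.fromEdgeSet_adj] at hadj
    obtain ⟨hmem, hne⟩ := hadj
    simp only [Set.mem_insert_iff, Set.mem_singleton_iff, Sym2.eq_iff] at hmem
    rcases hmem with (⟨rfl,rfl⟩|⟨rfl,rfl⟩)|(⟨rfl,rfl⟩|⟨rfl,rfl⟩)|(⟨rfl,rfl⟩|⟨rfl,rfl⟩)|
      (⟨rfl,rfl⟩|⟨rfl,rfl⟩)|(⟨rfl,rfl⟩|⟨rfl,rfl⟩)|(⟨rfl,rfl⟩|⟨rfl,rfl⟩) <;>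
      first
      | exact exy | exact eyx | exact exz | exact ezx | exact eyz | exact ezy
      | exact exw | exact ewx | exact eyw | exact ewy | exact ezp | exact epz

lemma copy_triP {c : Sym2 (Fin n) → Fin k} {i : Fin k} {x y z wx wy wz : Fin n}
    (h1 : x ≠ y) (h2 : x ≠ z) (h3 : y ≠ z)
    (hwx : wx ≠ x ∧ wx ≠ y ∧ wx ≠ z) (hwy : wy ≠ x ∧ wy ≠ y ∧ wy ≠ z)
    (hwz : wz ≠ x ∧ wz ≠ y ∧ wz ≠ z)
    (d1 : wx ≠ wy) (d2 : wx ≠ wz) (d3 : wy ≠ wz)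
    (exy : c s(x,y) = i) (exz : c s(x,z) = i) (eyz : c s(y,z) = i)
    (ex : c s(x,wx) = i) (ey : c s(y,wy) = i) (ez : c s(z,wz) = i) :
    MonoCopy triPendants c i := by
  obtain ⟨ha1, ha2, ha3⟩ := hwx
  obtain ⟨hb1, hb2, hb3⟩ := hwy
  obtain ⟨hc1, hc2, hc3⟩ := hwz
  have eyx : c s(y,x) = i := by rw [Sym2.eq_swap]; exact exy
  have ezx : c s(z,x) = i := by rw [Sym2.eq_swap]; exact exz
  have ezy : c s(z,y) = i := by rw [Sym2.eq_swap]; exact eyz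
  have ex' : c s(wx,x) = i := by rw [Sym2.eq_swap]; exact ex
  have ey' : c s(wy,y) = i := by rw [Sym2.eq_swap]; exact ey
  have ez' : c s(wz,z) = i := by rw [Sym2.eq_swap]; exact ez
  refine ⟨![x,y,z,wx,wy,wz], ?_, ?_⟩
  · intro a b hab
    have m0 : ![x,y,z,wx,wy,wz] 0 = x := rfl
    have m1 : ![x,y,z,wx,wy,wz] 1 = y := rfl
    have m2 : ![x,y,z,wx,wy,wz] 2 = z := rfl
    have m3 : ![x,y,z,wx,wy,wz] 3 = wx := rfl
    have m4 : ![x,y,z,wx,wy,wz] 4 = wy := rfl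
    have m5 : ![x,y,z,wx,wy,wz] 5 = wz := rfl
    fin_cases a <;> fin_cases b <;> simp_all [m0,m1,m2,m3,m4,m5]
  · intro a b hadj
    rw [triPendants, SimpleGraph.fromEdgeSet_adj] at hadj
    obtain ⟨hmem, hne⟩ := hadj
    simp only [Set.mem_insert_iff, Set.mem_singleton_iff, Sym2.eq_iff] at hmem
    rcases hmem with (⟨rfl,rfl⟩|⟨rfl,rfl⟩)|(⟨rfl,rfl⟩|⟨rfl,rfl⟩)|(⟨rfl,rfl⟩|⟨rfl,rfl⟩)|
      (⟨rfl,rfl⟩|⟨rfl,rfl⟩)|(⟨rfl,rfl⟩|⟨rfl,rfl⟩)|(⟨rfl,rfl⟩|⟨rfl,rfl⟩) <;>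
      first
      | exact exy | exact eyx | exact exz | exact ezx | exact eyz | exact ezy
      | exact ex | exact ex' | exact ey | exact ey' | exact ez | exact ez'


/-- General Lemma A: a monochromatic triangle each of whose vertices has a
neighbour of the same colour outside the triangle yields a member of the family. -/
lemma lemmaA {c : Sym2 (Fin n) → Fin k} {i : Fin k} {x y z wx wy wz : Fin n}
    (h1 : x ≠ y) (h2 : x ≠ z) (h3 : y ≠ z)
    (exy : c s(x,y) = i) (exz : c s(x,z) = i) (eyz : c s(y,z) = i)
    (hwx : wx ≠ x ∧ wx ≠ y ∧ wx ≠ z) (hwy : wy ≠ x ∧ wy ≠ y ∧ wy ≠ z)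
    (hwz : wz ≠ x ∧ wz ≠ y ∧ wz ≠ z)
    (ex : c s(x,wx) = i) (ey : c s(y,wy) = i) (ez : c s(z,wz) = i) :
    MonoCopy K4 c i ∨ MonoCopy K4ePendant c i ∨ MonoCopy triPendants c i := by
  by_cases hxy : wx = wy
  · by_cases hxz : wx = wz
    · subst hxy; subst hxz
      exact Or.inl (copy_K4 h1 h2 hwx.1.symm h3 hwx.2.1.symm hwx.2.2.symm
        exy exz ex eyz ey ez)
    · subst hxy
      exact Or.inr (Or.inl (copy_K4eP h1 h2 h3 hwx hwz hxz exy exz eyz ex ey ez))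
  · by_cases hxz : wx = wz
    · subst hxz
      refine Or.inr (Or.inl (copy_K4eP h2 h1 h3.symm
        ⟨hwx.1, hwx.2.2, hwx.2.1⟩ ⟨hwy.1, hwy.2.2, hwy.2.1⟩ hxy
        exz exy ?_ ex ez ey))
      rw [Sym2.eq_swap]; exact eyz
    · by_cases hyz : wy = wz
      · subst hyz
        refine Or.inr (Or.inl (copy_K4eP h3 h1.symm h2.symm
          ⟨hwy.2.1, hwy.2.2, hwy.1⟩ ⟨hwx.2.1, hwx.2.2, hwx.1⟩ (Ne.symm hxy)
          eyz ?_ ?_ ey ez ex))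
        · rw [Sym2.eq_swap]; exact exy
        · rw [Sym2.eq_swap]; exact exz
      · exact Or.inr (Or.inr (copy_triP h1 h2 h3 hwx hwy hwz hxy hxz hyz
          exy exz eyz ex ey ez))

def NoCopy (c : Sym2 (Fin n) → Fin k) : Prop :=
  ∀ i : Fin k, ¬ (MonoCopy K4 c i ∨ MonoCopy K4ePendant c i ∨ MonoCopy triPendants c i)

/-- In a copy-free colouring every monochromatic triangle has a "key": a vertex
all of whose same-coloured neighbours lie in the triangle. -/
lemma exists_blocker {c : Sym2 (Fin n) → Fin k} (hno : NoCopy c) {i : Fin k}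
    {x y z : Fin n} (h1 : x ≠ y) (h2 : x ≠ z) (h3 : y ≠ z)
    (exy : c s(x,y) = i) (exz : c s(x,z) = i) (eyz : c s(y,z) = i) :
    (∀ w, w ≠ x → w ≠ y → w ≠ z → c s(x,w) ≠ i) ∨
    (∀ w, w ≠ x → w ≠ y → w ≠ z → c s(y,w) ≠ i) ∨
    (∀ w, w ≠ x → w ≠ y → w ≠ z → c s(z,w) ≠ i) := by
  by_contra hcon
  push_neg at hcon
  obtain ⟨⟨wx, hx1, hx2, hx3, ex⟩, ⟨wy, hy1, hy2, hy3, ey⟩, ⟨wz, hz1, hz2, hz3, ez⟩⟩ := hcon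
  exact hno i (lemmaA h1 h2 h3 exy exz eyz ⟨hx1, hx2, hx3⟩ ⟨hy1, hy2, hy3⟩
    ⟨hz1, hz2, hz3⟩ ex ey ez)


open Finset in
/-- Multicolour triangle Ramsey bound. -/
lemma T3_bound (c : Sym2 (Fin n) → Fin k) :
    ∀ (L : Finset (Fin k)) (S : Finset (Fin n)),
    (∀ x ∈ S, ∀ y ∈ S, x ≠ y → c s(x,y) ∈ L) →
    (∀ p ∈ L, ∀ x ∈ S, ∀ y ∈ S, ∀ z ∈ S, x ≠ y → x ≠ z → y ≠ z →
      ¬(c s(x,y) = p ∧ c s(x,z) = p ∧ c s(y,z) = p)) →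
    S.card < T3 L.card := by
  intro L
  induction L using Finset.strongInduction with
  | _ L IH =>
    intro S hint hnotri
    by_contra hbig
    push_neg at hbig
    -- L is nonempty
    rcases Finset.eq_empty_or_nonempty L with rfl | ⟨d0, hd0⟩
    · -- T3 0 = 2, so S has ≥ 2 elements, giving an edge with colour in ∅
      have h2 : 2 ≤ S.card := hbig
      obtain ⟨x, hx, y, hy, hxy⟩ := Finset.one_lt_card.mp h2
      exact absurd (hint x hx y hy hxy) (by simp)
    · obtain ⟨m, hm⟩ : ∃ m, L.card = m + 1 :=
        ⟨L.card - 1, by have := Finset.card_pos.mpr ⟨d0, hd0⟩; omega⟩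
      have hS1 : 1 ≤ S.card := by
        have : 2 ≤ T3 (L.card) := by
          rcases Nat.eq_zero_or_pos m with rfl | hmp
          · rw [hm]; decide
          · have := T3_ge L.card (by omega); omega
        omega
      obtain ⟨u, hu⟩ := Finset.card_pos.mp (show 0 < S.card by omega)
      have hfib : (S.erase u).card = ∑ d ∈ L, ((S.erase u).filter (fun y => c s(u,y) = d)).card := by
        apply Finset.card_eq_sum_card_fiberwise
        intro y hy
        exact hint u hu y (Finset.mem_of_mem_erase hy) (Ne.symm (Finset.ne_of_mem_erase hy))
      -- some fiber is large
      have hex : ∃ d ∈ L, T3 m ≤ ((S.erase u).filter (fun y => c s(u,y) = d)).card := by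
        by_contra hall
        push_neg at hall
        have hsum : ∑ d ∈ L, ((S.erase u).filter (fun y => c s(u,y) = d)).card
            ≤ ∑ _d ∈ L, (T3 m - 1) := by
          apply Finset.sum_le_sum
          intro d hd
          have := hall d hd; omega
        rw [Finset.sum_const, smul_eq_mul, hm] at hsum
        have hcard : (S.erase u).card = S.card - 1 := Finset.card_erase_of_mem hu
        have hT : T3 L.card = (m+1) * (T3 m - 1) + 2 := by rw [hm]; rfl
        omega
      obtain ⟨d, hd, hdbig⟩ := hex
      set A := (S.erase u).filter (fun y => c s(u,y) = d) with hA
      have hAsub : A ⊆ S := (Finset.filter_subset _ _).trans (Finset.erase_subset _ _)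
      have hAu : ∀ x ∈ A, c s(u,x) = d ∧ x ≠ u := by
        intro x hx
        rw [hA, Finset.mem_filter] at hx
        exact ⟨hx.2, Finset.ne_of_mem_erase hx.1⟩
      have hAint : ∀ x ∈ A, ∀ y ∈ A, x ≠ y → c s(x,y) ∈ L.erase d := by
        intro x hx y hy hxy
        rw [Finset.mem_erase]
        refine ⟨?_, hint x (hAsub hx) y (hAsub hy) hxy⟩
        intro hcd
        obtain ⟨hux, hxu⟩ := hAu x hx
        obtain ⟨huy, hyu⟩ := hAu y hy
        exact hnotri d hd u hu x (hAsub hx) y (hAsub hy) (Ne.symm hxu) (Ne.symm hyu) hxy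
          ⟨hux, huy, hcd⟩
      have hAno : ∀ p ∈ L.erase d, ∀ x ∈ A, ∀ y ∈ A, ∀ z ∈ A, x ≠ y → x ≠ z → y ≠ z →
          ¬(c s(x,y) = p ∧ c s(x,z) = p ∧ c s(y,z) = p) := by
        intro p hp x hx y hy z hz e1 e2 e3
        exact hnotri p (Finset.mem_of_mem_erase hp) x (hAsub hx) y (hAsub hy) z (hAsub hz) e1 e2 e3
      have hsmall := IH (L.erase d) (Finset.erase_ssubset hd) A hAint hAno
      rw [Finset.card_erase_of_mem hd, hm] at hsmall
      simp only [Nat.add_sub_cancel] at hsmall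
      omega


open Finset in
/-- Vertex cover of a set of nondiagonal `Sym2` "edges". -/
lemma cover_lemma (E : Finset (Sym2 (Fin n))) (hE : ∀ e ∈ E, ¬ e.IsDiag) :
    ∃ C : Finset (Fin n),
      (∀ e ∈ E, ∃ v ∈ C, v ∈ e) ∧
      (∀ v ∈ C, ∃ e ∈ E, v ∈ e) ∧
      C.card ≤ E.card ∧
      3 * C.card ≤ E.card + (Finset.univ.filter fun v => ∃ e ∈ E, v ∈ e).card := by
  classical
  induction E using Finset.strongInduction with
  | _ E IH =>
  by_cases hdeg : ∃ v : Fin n, 2 ≤ (E.filter (fun e => v ∈ e)).card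
  · obtain ⟨v, hv⟩ := hdeg
    set E' := E.filter (fun e => ¬ v ∈ e) with hE'
    have hsubset : E' ⊆ E := Finset.filter_subset _ _
    have hvE : ∃ e ∈ E, v ∈ e := by
      obtain ⟨e, he⟩ := Finset.card_pos.mp (show 0 < (E.filter (fun e => v ∈ e)).card by omega)
      rw [Finset.mem_filter] at he
      exact ⟨e, he.1, he.2⟩
    have hss : E' ⊂ E := by
      obtain ⟨e, he, hve⟩ := hvE
      refine (Finset.ssubset_iff_of_subset hsubset).mpr ⟨e, he, ?_⟩
      rw [hE', Finset.mem_filter]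
      tauto
    obtain ⟨C', hc1, hc2, hc3, hc4⟩ := IH E' hss (fun e he => hE e (hsubset he))
    have hcount : (E.filter (fun e => v ∈ e)).card + E'.card = E.card := by
      rw [hE']
      exact Finset.card_filter_add_card_filter_not _
    refine ⟨insert v C', ?_, ?_, ?_, ?_⟩
    · intro e he
      by_cases hvin : v ∈ e
      · exact ⟨v, Finset.mem_insert_self _ _, hvin⟩
      · obtain ⟨w, hw, hwe⟩ := hc1 e (by rw [hE', Finset.mem_filter]; exact ⟨he, hvin⟩)
        exact ⟨w, Finset.mem_insert_of_mem hw, hwe⟩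
    · intro w hw
      rcases Finset.mem_insert.mp hw with rfl | hw'
      · exact hvE
      · obtain ⟨e, he, hwe⟩ := hc2 w hw'
        exact ⟨e, hsubset he, hwe⟩
    · have := Finset.card_insert_le v C'
      omega
    · set V := Finset.univ.filter (fun w : Fin n => ∃ e ∈ E, w ∈ e) with hV
      set V' := Finset.univ.filter (fun w : Fin n => ∃ e ∈ E', w ∈ e) with hV'
      have hVsub : V' ⊆ V := by
        intro w hw
        rw [hV, Finset.mem_filter]
        rw [hV', Finset.mem_filter] at hw
        obtain ⟨-, e, he, hwe⟩ := hw
        exact ⟨Finset.mem_univ _, e, hsubset he, hwe⟩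
      have hvV : v ∈ V := by
        rw [hV, Finset.mem_filter]
        exact ⟨Finset.mem_univ _, hvE⟩
      have hvV' : v ∉ V' := by
        rw [hV', Finset.mem_filter]
        rintro ⟨-, e, he, hve⟩
        rw [hE', Finset.mem_filter] at he
        exact he.2 hve
      have hVlt : V'.card < V.card :=
        Finset.card_lt_card ⟨hVsub, fun hsub => hvV' (hsub hvV)⟩
      have := Finset.card_insert_le v C'
      omega
  · push_neg at hdeg
    refine ⟨E.image (fun e => (Quot.out e).1), ?_, ?_, Finset.card_image_le, ?_⟩
    · intro e he
      exact ⟨(Quot.out e).1, Finset.mem_image_of_mem _ he, Sym2.out_fst_mem e⟩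
    · intro w hw
      obtain ⟨e, he, rfl⟩ := Finset.mem_image.mp hw
      exact ⟨e, he, Sym2.out_fst_mem e⟩
    · -- 2 * E.card ≤ V.card
      set V := Finset.univ.filter (fun w : Fin n => ∃ e ∈ E, w ∈ e) with hV
      have hbi : (E.biUnion (fun e => Finset.univ.filter (fun w : Fin n => w ∈ e))) ⊆ V := by
        intro w hw
        obtain ⟨e, he, hwe⟩ := Finset.mem_biUnion.mp hw
        rw [Finset.mem_filter] at hwe
        rw [hV, Finset.mem_filter]
        exact ⟨Finset.mem_univ _, e, he, hwe.2⟩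
      have hdisj : ∀ e ∈ E, ∀ f ∈ E, e ≠ f →
          Disjoint (Finset.univ.filter (fun w : Fin n => w ∈ e))
            (Finset.univ.filter (fun w : Fin n => w ∈ f)) := by
        intro e he f hf hef
        rw [Finset.disjoint_left]
        intro w hwe hwf
        rw [Finset.mem_filter] at hwe hwf
        have h2 : 2 ≤ (E.filter (fun g => w ∈ g)).card := by
          have : ({e, f} : Finset (Sym2 (Fin n))) ⊆ E.filter (fun g => w ∈ g) := by
            intro g hg
            rcases Finset.mem_insert.mp hg with rfl | hg
            · rw [Finset.mem_filter]; exact ⟨he, hwe.2⟩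
            · rw [Finset.mem_singleton] at hg
              subst hg
              rw [Finset.mem_filter]; exact ⟨hf, hwf.2⟩
          calc 2 = ({e, f} : Finset (Sym2 (Fin n))).card := by
                rw [Finset.card_insert_of_notMem (by simpa using hef), Finset.card_singleton]
            _ ≤ _ := Finset.card_le_card this
        exact absurd h2 (by have := hdeg w; omega)
      have hcard2 : ∀ e ∈ E, (Finset.univ.filter (fun w : Fin n => w ∈ e)).card = 2 := by
        intro e he
        have hnd := hE e he
        induction e using Sym2.ind with
        | _ a b =>
          have hab : a ≠ b := by
            intro h; exact hnd (by rw [h]; exact Sym2.mk_isDiag_iff.mpr rfl)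
          have : (Finset.univ.filter (fun w : Fin n => w ∈ s(a,b))) = {a, b} := by
            ext w
            simp [Sym2.mem_iff]
          rw [this, Finset.card_insert_of_notMem (by simpa using hab), Finset.card_singleton]
      have hVsum : 2 * E.card ≤ V.card := by
        calc 2 * E.card = ∑ e ∈ E, 2 := by rw [Finset.sum_const, smul_eq_mul]; ring
          _ = ∑ e ∈ E, (Finset.univ.filter (fun w : Fin n => w ∈ e)).card :=
              Finset.sum_congr rfl (fun e he => (hcard2 e he).symm)
          _ = (E.biUnion (fun e => Finset.univ.filter (fun w : Fin n => w ∈ e))).card :=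
              (Finset.card_biUnion hdisj).symm
          _ ≤ V.card := Finset.card_le_card hbi
      have := Finset.card_image_le (s := E) (f := fun e => (Quot.out e).1)
      omega


open Finset in
noncomputable def degc (c : Sym2 (Fin n) → Fin k) (i : Fin k) (v : Fin n) : ℕ :=
  (Finset.univ.filter fun w => w ≠ v ∧ c s(v,w) = i).card

open Finset in
lemma sum_degc (c : Sym2 (Fin n) → Fin k) (v : Fin n) :
    ∑ i : Fin k, degc c i v = n - 1 := by
  classical
  have h1 : (Finset.univ.erase v).card = n - 1 := by
    rw [Finset.card_erase_of_mem (Finset.mem_univ v), Finset.card_univ, Fintype.card_fin]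
  rw [← h1]
  rw [Finset.card_eq_sum_card_fiberwise (f := fun w => c s(v,w)) (t := Finset.univ)
    (fun x _ => Finset.mem_univ _)]
  refine Finset.sum_congr rfl (fun i _ => ?_)
  rw [degc]
  congr 1
  ext w
  simp only [Finset.mem_filter, Finset.mem_erase, Finset.mem_univ, true_and, and_true]

open Finset in
lemma total_degree_low (c : Sym2 (Fin n) → Fin k) (q : Fin n)
    (h : ∀ d : Fin k, degc c d q ≤ 2) : n ≤ 2*k + 1 := by
  have h1 := sum_degc c q
  have h2 : ∑ i : Fin k, degc c i q ≤ ∑ _i : Fin k, 2 :=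
    Finset.sum_le_sum (fun i _ => h i)
  rw [Finset.sum_const, Finset.card_univ, Fintype.card_fin, smul_eq_mul] at h2
  omega

open Finset in
lemma degc_le_of_blocker {c : Sym2 (Fin n) → Fin k} {i : Fin k} {q a b : Fin n}
    (h : ∀ w, w ≠ q → w ≠ a → w ≠ b → c s(q,w) ≠ i) :
    degc c i q ≤ 2 := by
  classical
  have hsub : (Finset.univ.filter fun w => w ≠ q ∧ c s(q,w) = i) ⊆ {a,b} := by
    intro w hw
    rw [Finset.mem_filter] at hw
    by_contra hcon
    simp only [Finset.mem_insert, Finset.mem_singleton] at hcon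
    push_neg at hcon
    exact h w hw.2.1 hcon.1 hcon.2 hw.2.2
  calc degc c i q ≤ ({a,b} : Finset (Fin n)).card := Finset.card_le_card hsub
    _ ≤ 2 := Finset.card_insert_le _ _ |>.trans (by simp)

def KeyW (c : Sym2 (Fin n) → Fin k) (i : Fin k) (S : Finset (Fin n)) (q a b : Fin n) : Prop :=
  a ∈ S ∧ b ∈ S ∧ q ≠ a ∧ q ≠ b ∧ a ≠ b ∧
  c s(q,a) = i ∧ c s(q,b) = i ∧ c s(a,b) = i ∧
  ∀ w, w ≠ q → w ≠ a → w ≠ b → c s(q,w) ≠ i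

def IsKey (c : Sym2 (Fin n) → Fin k) (i : Fin k) (S : Finset (Fin n)) (q : Fin n) : Prop :=
  q ∈ S ∧ ∃ p : Fin n × Fin n, KeyW c i S q p.1 p.2

open Classical in
noncomputable def keyPair (c : Sym2 (Fin n) → Fin k) (i : Fin k) (S : Finset (Fin n))
    (q : Fin n) : Fin n × Fin n :=
  if h : IsKey c i S q then h.2.choose else (q, q)

lemma keyPair_spec {c : Sym2 (Fin n) → Fin k} {i : Fin k} {S : Finset (Fin n)} {q : Fin n}
    (h : IsKey c i S q) :
    KeyW c i S q (keyPair c i S q).1 (keyPair c i S q).2 := by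
  rw [keyPair]
  rw [dif_pos h]
  exact h.2.choose_spec

lemma key_nbr {c : Sym2 (Fin n) → Fin k} {i : Fin k} {S : Finset (Fin n)} {q : Fin n}
    (h : IsKey c i S q) {u : Fin n} (hu : u ≠ q) (hc : c s(q,u) = i) :
    u = (keyPair c i S q).1 ∨ u = (keyPair c i S q).2 := by
  have spec := keyPair_spec h
  by_contra hcon
  push_neg at hcon
  exact spec.2.2.2.2.2.2.2.2 u hu hcon.1 hcon.2 hc

lemma key_deg {c : Sym2 (Fin n) → Fin k} {i : Fin k} {S : Finset (Fin n)} {q : Fin n}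
    (h : IsKey c i S q) : degc c i q ≤ 2 := by
  have spec := keyPair_spec h
  apply degc_le_of_blocker (a := (keyPair c i S q).1) (b := (keyPair c i S q).2)
  intro w hwq hwa hwb
  exact spec.2.2.2.2.2.2.2.2 w hwq hwa hwb

def MinKey (c : Sym2 (Fin n) → Fin k) (i : Fin k) (S : Finset (Fin n)) (q : Fin n) : Prop :=
  IsKey c i S q ∧ ∀ q', IsKey c i S q' → q' ≠ q → c s(q,q') = i → q < q'

lemma minkey_not_adj {c : Sym2 (Fin n) → Fin k} {i : Fin k} {S : Finset (Fin n)} {q q' : Fin n}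
    (h : MinKey c i S q) (h' : MinKey c i S q') (hne : q ≠ q') :
    c s(q,q') ≠ i := by
  intro hc
  have h1 := h.2 q' h'.1 (Ne.symm hne) hc
  have hc' : c s(q',q) = i := by rw [Sym2.eq_swap]; exact hc
  have h2 := h'.2 q h.1 hne hc'
  exact (lt_asymm h1) h2

lemma partners_eq {c : Sym2 (Fin n) → Fin k} {i : Fin k} {S : Finset (Fin n)} {q : Fin n}
    (hkey : IsKey c i S q) {u v : Fin n}
    (hu : u ≠ q) (hv : v ≠ q) (huv : u ≠ v)
    (ecu : c s(q,u) = i) (ecv : c s(q,v) = i) {w : Fin n}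
    (hw : w = (keyPair c i S q).1 ∨ w = (keyPair c i S q).2) :
    w = u ∨ w = v := by
  have h1 := key_nbr hkey hu ecu
  have h2 := key_nbr hkey hv ecv
  rcases h1 with h1|h1 <;> rcases h2 with h2|h2
  · exact absurd (h1.trans h2.symm) huv
  · rcases hw with rfl|rfl
    · exact Or.inl h1.symm
    · exact Or.inr h2.symm
  · rcases hw with rfl|rfl
    · exact Or.inr h2.symm
    · exact Or.inl h1.symm
  · exact absurd (h1.trans h2.symm) huv

lemma minkey_of {c : Sym2 (Fin n) → Fin k} {i : Fin k} {S : Finset (Fin n)} {q : Fin n}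
    (hkey : IsKey c i S q) {u v : Fin n}
    (huv : u ≠ v) (hqu : q ≠ u) (hqv : q ≠ v)
    (ecu : c s(q,u) = i) (ecv : c s(q,v) = i)
    (hmin : ∀ q', IsKey c i S q' → (q' = u ∨ q' = v) → q ≤ q') :
    MinKey c i S q := by
  refine ⟨hkey, ?_⟩
  intro q' hq' hne hadj
  have hw := key_nbr hkey hne hadj
  have huv2 := partners_eq hkey (Ne.symm hqu) (Ne.symm hqv) huv ecu ecv hw
  exact lt_of_le_of_ne (hmin q' hq' huv2) (Ne.symm hne)

open Finset in
lemma triangle_minkey {c : Sym2 (Fin n) → Fin k} (hno : NoCopy c) {i : Fin k}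
    {S : Finset (Fin n)} {x y z : Fin n}
    (hx : x ∈ S) (hy : y ∈ S) (hz : z ∈ S)
    (h1 : x ≠ y) (h2 : x ≠ z) (h3 : y ≠ z)
    (exy : c s(x,y) = i) (exz : c s(x,z) = i) (eyz : c s(y,z) = i) :
    ∃ q, (q = x ∨ q = y ∨ q = z) ∧ MinKey c i S q := by
  classical
  have eyx : c s(y,x) = i := by rw [Sym2.eq_swap]; exact exy
  have ezx : c s(z,x) = i := by rw [Sym2.eq_swap]; exact exz
  have ezy : c s(z,y) = i := by rw [Sym2.eq_swap]; exact eyz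
  have hKtne : (({x,y,z} : Finset (Fin n)).filter (fun q => IsKey c i S q)).Nonempty := by
    rcases exists_blocker hno h1 h2 h3 exy exz eyz with hb | hb | hb
    · exact ⟨x, Finset.mem_filter.mpr ⟨by simp, hx, ⟨(y,z), hy, hz, h1, h2, h3,
        exy, exz, eyz, hb⟩⟩⟩
    · exact ⟨y, Finset.mem_filter.mpr ⟨by simp, hy, ⟨(x,z), hx, hz, h1.symm, h3, h2,
        eyx, eyz, exz, fun w hwy hwx hwz => hb w hwx hwy hwz⟩⟩⟩
    · exact ⟨z, Finset.mem_filter.mpr ⟨by simp, hz, ⟨(x,y), hx, hy, h2.symm, h3.symm, h1,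
        ezx, ezy, exy, fun w hwz hwx hwy => hb w hwx hwy hwz⟩⟩⟩
  obtain ⟨hq0T, hq0key⟩ := Finset.mem_filter.mp (Finset.min'_mem _ hKtne)
  have hmin : ∀ q', IsKey c i S q' → (q' = x ∨ q' = y ∨ q' = z) →
      (({x,y,z} : Finset (Fin n)).filter (fun q => IsKey c i S q)).min' hKtne ≤ q' := by
    intro q' hq' hq'T
    exact Finset.min'_le _ q' (Finset.mem_filter.mpr
      ⟨by rcases hq'T with rfl|rfl|rfl <;> simp, hq'⟩)
  have hq0T' : (({x,y,z} : Finset (Fin n)).filter (fun q => IsKey c i S q)).min' hKtne = x ∨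
      (({x,y,z} : Finset (Fin n)).filter (fun q => IsKey c i S q)).min' hKtne = y ∨
      (({x,y,z} : Finset (Fin n)).filter (fun q => IsKey c i S q)).min' hKtne = z := by
    have := hq0T
    simp only [Finset.mem_insert, Finset.mem_singleton] at this
    exact this
  refine ⟨(({x,y,z} : Finset (Fin n)).filter (fun q => IsKey c i S q)).min' hKtne, hq0T', ?_⟩
  rcases hq0T' with heq | heq | heq
  · rw [heq] at hq0key ⊢
    refine minkey_of hq0key h3 h1 h2 exy exz (fun q' hq' hmem => ?_)
    have h := hmin q' hq' (hmem.elim (fun h => Or.inr (Or.inl h)) (fun h => Or.inr (Or.inr h)))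
    rw [heq] at h; exact h
  · rw [heq] at hq0key ⊢
    refine minkey_of hq0key h2 h1.symm h3 eyx eyz (fun q' hq' hmem => ?_)
    have h := hmin q' hq' (hmem.elim (fun h => Or.inl h) (fun h => Or.inr (Or.inr h)))
    rw [heq] at h; exact h
  · rw [heq] at hq0key ⊢
    refine minkey_of hq0key h1 h2.symm h3.symm ezx ezy (fun q' hq' hmem => ?_)
    have h := hmin q' hq' (hmem.elim (fun h => Or.inl h) (fun h => Or.inr (Or.inl h)))
    rw [heq] at h; exact h


open Finset in
theorem main (c : Sym2 (Fin n) → Fin k) (hn : 2*k + 4 ≤ n) (hno : NoCopy c) :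
    ∀ m : ℕ, ∀ L : Finset (Fin k), L.card = m → ∀ S : Finset (Fin n),
    (∀ x ∈ S, ∀ y ∈ S, x ≠ y → c s(x,y) ∈ L) →
    (∀ x ∈ S, ∀ d : Fin k, d ∉ L → degc c d x ≤ 2) →
    S.card < W m := by
  classical
  intro m
  induction m using Nat.strong_induction_on with
  | _ m IH =>
  match m with
  | 0 =>
    intro L hL S hint h2
    by_contra hbig
    push_neg at hbig
    have h2' : 2 ≤ S.card := by
      have : W 0 = 2 := rfl
      omega
    obtain ⟨x, hx, y, hy, hxy⟩ := Finset.one_lt_card.mp h2'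
    have hc := hint x hx y hy hxy
    rw [Finset.card_eq_zero.mp hL] at hc
    simp at hc
  | 1 =>
    intro L hL S hint h2
    by_contra hbig
    push_neg at hbig
    have h3 : 2 < S.card := by
      have : W 1 = 3 := rfl
      omega
    obtain ⟨x, hx, y, hy, z, hz, hxy, hxz, hyz⟩ := Finset.two_lt_card.mp h3
    obtain ⟨ℓ, rfl⟩ := Finset.card_eq_one.mp hL
    have exy : c s(x,y) = ℓ := by
      have := hint x hx y hy hxy; simpa using this
    have exz : c s(x,z) = ℓ := by
      have := hint x hx z hz hxz; simpa using this
    have eyz : c s(y,z) = ℓ := by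
      have := hint y hy z hz hyz; simpa using this
    have contra : ∀ q ∈ S, degc c ℓ q ≤ 2 → False := by
      intro q hq hdl
      have hdeg : ∀ d : Fin k, degc c d q ≤ 2 := by
        intro d
        by_cases hd : d = ℓ
        · subst hd; exact hdl
        · exact h2 q hq d (by simpa using hd)
      have := total_degree_low c q hdeg
      omega
    rcases exists_blocker hno hxy hxz hyz exy exz eyz with hb | hb | hb
    · exact contra x hx (degc_le_of_blocker hb)
    · exact contra y hy (degc_le_of_blocker (fun w h1 h2 h3 => hb w h2 h1 h3))
    · exact contra z hz (degc_le_of_blocker (fun w h1 h2 h3 => hb w h2 h3 h1))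
  | (m+2) =>
    intro L hL S hint h2
    suffices inner : ∀ (i : ℕ) (P : Finset (Fin k)) (S' : Finset (Fin n)), P ⊆ L →
        P.card + i = m + 2 → S' ⊆ S →
        (∀ p ∈ P, ∀ x ∈ S', ∀ y ∈ S', ∀ z ∈ S', x ≠ y → x ≠ z → y ≠ z →
          ¬(c s(x,y) = p ∧ c s(x,z) = p ∧ c s(y,z) = p)) →
        S'.card < U (W (m+1)) (T3 (m+2)) i by
      have h0 := inner (m+2) ∅ S (Finset.empty_subset L) (by simp) (le_refl S) (by simp)
      have : W (m+2) = U (W (m+1)) (T3 (m+2)) (m+2) := rfl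
      omega
    intro i
    induction i with
    | zero =>
      intro P S' hPL hPcard hS'S hPfree
      have hPeq : P = L := Finset.eq_of_subset_of_card_le hPL (by omega)
      subst hPeq
      have h0 := T3_bound c P S'
        (fun x hx y hy hxy => hint x (hS'S hx) y (hS'S hy) hxy) hPfree
      rw [hL] at h0
      have e : U (W (m+1)) (T3 (m+2)) 0 = T3 (m+2) := rfl
      omega
    | succ i IHi =>
      intro P S' hPL hPcard hS'S hPfree
      by_contra hbig
      push_neg at hbig
      have hPne : P ≠ L := by
        intro h; subst h; omega
      obtain ⟨c0, hc0L, hc0P⟩ := Finset.exists_of_ssubset (hPL.ssubset_of_ne hPne)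
      set A := W (m+1) with hAdef
      set K := S'.filter (fun q => MinKey c c0 S' q) with hK
      have hKsub : K ⊆ S' := Finset.filter_subset _ _
      have hKmin : ∀ q ∈ K, MinKey c c0 S' q := by
        intro q hq; exact (Finset.mem_filter.mp hq).2
      have hKlt : K.card < A := by
        rw [hAdef]
        refine IH (m+1) (by omega) (L.erase c0)
          (by rw [Finset.card_erase_of_mem hc0L]; omega) K ?_ ?_
        · intro a ha b hb hab
          rw [Finset.mem_erase]
          constructor
          · exact minkey_not_adj (hKmin a ha) (hKmin b hb) hab
          · exact hint a (hS'S (hKsub ha)) b (hS'S (hKsub hb)) hab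
        · intro a ha d hd
          by_cases hdc : d = c0
          · subst hdc
            exact key_deg (hKmin a ha).1
          · refine h2 a (hS'S (hKsub ha)) d ?_
            intro hdL
            exact hd (Finset.mem_erase.mpr ⟨hdc, hdL⟩)
      set E := K.image (fun q => s((keyPair c c0 S' q).1, (keyPair c c0 S' q).2)) with hE
      have hEnd : ∀ e ∈ E, ¬ e.IsDiag := by
        intro e he
        obtain ⟨q, hq, rfl⟩ := Finset.mem_image.mp he
        have spec := keyPair_spec (hKmin q hq).1
        rw [Sym2.mk_isDiag_iff]
        exact spec.2.2.2.2.1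
      obtain ⟨C, hcov, hCV, hC1, hC3⟩ := cover_lemma E hEnd
      have hmemE : ∀ v, (∃ e ∈ E, v ∈ e) → ∃ q ∈ K,
          (v = (keyPair c c0 S' q).1 ∨ v = (keyPair c c0 S' q).2) := by
        intro v ⟨e, he, hv⟩
        obtain ⟨q, hq, rfl⟩ := Finset.mem_image.mp he
        rw [Sym2.mem_iff] at hv
        exact ⟨q, hq, hv⟩
      have hVS : ∀ v, (∃ e ∈ E, v ∈ e) → v ∈ S' := by
        intro v hv
        obtain ⟨q, hq, hv2⟩ := hmemE v hv
        have spec := keyPair_spec (hKmin q hq).1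
        rcases hv2 with rfl | rfl
        · exact spec.1
        · exact spec.2.1
      have hCS : C ⊆ S' := fun v hv => hVS v (hCV v hv)
      -- K and the wing-vertex set are disjoint
      have hKV : Disjoint K (Finset.univ.filter fun v => ∃ e ∈ E, v ∈ e) := by
        rw [Finset.disjoint_left]
        intro v hvK hvV
        rw [Finset.mem_filter] at hvV
        obtain ⟨q, hq, hv2⟩ := hmemE v hvV.2
        have spec := keyPair_spec (hKmin q hq).1
        have hadj : c s(q,v) = c0 ∧ v ≠ q := by
          rcases hv2 with rfl | rfl
          · exact ⟨spec.2.2.2.2.2.1, Ne.symm spec.2.2.1⟩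
          · exact ⟨spec.2.2.2.2.2.2.1, Ne.symm spec.2.2.2.1⟩
        exact minkey_not_adj (hKmin q hq) (hKmin v hvK) (Ne.symm hadj.2) hadj.1
      have hEV : E.card + (Finset.univ.filter fun v => ∃ e ∈ E, v ∈ e).card ≤ S'.card := by
        have h1 : E.card ≤ K.card := Finset.card_image_le
        have h2' : K.card + (Finset.univ.filter fun v => ∃ e ∈ E, v ∈ e).card
            = (K ∪ (Finset.univ.filter fun v => ∃ e ∈ E, v ∈ e)).card :=
          (Finset.card_union_of_disjoint hKV).symm
        have h3' : (K ∪ (Finset.univ.filter fun v => ∃ e ∈ E, v ∈ e)) ⊆ S' := by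
          intro v hv
          rcases Finset.mem_union.mp hv with hv | hv
          · exact hKsub hv
          · rw [Finset.mem_filter] at hv
            exact hVS v hv.2
        have := Finset.card_le_card h3'
        omega
      have h3C : 3 * C.card ≤ S'.card := by omega
      have hCE : C.card + 1 ≤ A := by
        have h1 : E.card ≤ K.card := Finset.card_image_le
        omega
      -- the set after deletion
      set S2 := S' \ C with hS2
      have hS2sub : S2 ⊆ S' := Finset.sdiff_subset
      have hS2card : S2.card = S'.card - C.card := Finset.card_sdiff_of_subset hCS
      -- no c0-triangle in S2
      have hc0free : ∀ x ∈ S2, ∀ y ∈ S2, ∀ z ∈ S2, x ≠ y → x ≠ z → y ≠ z →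
          ¬(c s(x,y) = c0 ∧ c s(x,z) = c0 ∧ c s(y,z) = c0) := by
        rintro x hx y hy z hz hxy hxz hyz ⟨exy, exz, eyz⟩
        obtain ⟨q, hqT, hqmin⟩ := triangle_minkey hno (hS2sub hx) (hS2sub hy) (hS2sub hz)
          hxy hxz hyz exy exz eyz
        have hqK : q ∈ K := by
          rw [hK, Finset.mem_filter]
          exact ⟨hqmin.1.1, hqmin⟩
        have heE : s((keyPair c c0 S' q).1, (keyPair c c0 S' q).2) ∈ E :=
          Finset.mem_image_of_mem _ hqK
        obtain ⟨v, hvC, hve⟩ := hcov _ heE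
        rw [Sym2.mem_iff] at hve
        -- v is one of the two triangle partners of q
        have hvT : v = x ∨ v = y ∨ v = z := by
          rcases hqT with rfl | rfl | rfl
          · have := partners_eq hqmin.1 (u := y) (v := z) (Ne.symm hxy) (Ne.symm hxz) hyz
              exy exz hve
            tauto
          · have exy' : c s(q,x) = c0 := by rw [Sym2.eq_swap]; exact exy
            have := partners_eq hqmin.1 (u := x) (v := z) hxy (Ne.symm hyz) hxz
              exy' eyz hve
            tauto
          · have exz' : c s(q,x) = c0 := by rw [Sym2.eq_swap]; exact exz
            have eyz' : c s(q,y) = c0 := by rw [Sym2.eq_swap]; exact eyz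
            have := partners_eq hqmin.1 (u := x) (v := y) hxz hyz hxy
              exz' eyz' hve
            tauto
        have hvS2 : v ∈ S2 := by
          rcases hvT with rfl | rfl | rfl <;> assumption
        rw [hS2, Finset.mem_sdiff] at hvS2
        exact hvS2.2 hvC
      -- recurse
      have hrec := IHi (insert c0 P) S2 (Finset.insert_subset hc0L hPL)
        (by rw [Finset.card_insert_of_notMem hc0P]; omega)
        (hS2sub.trans hS'S)
        (by
          intro p hp
          rcases Finset.mem_insert.mp hp with rfl | hpP
          · exact hc0free
          · intro x hx y hy z hz e1 e2 e3
            exact hPfree p hpP x (hS2sub hx) y (hS2sub hy) z (hS2sub hz) e1 e2 e3)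
      have hUeq : U A (T3 (m+2)) (i+1)
          = U A (T3 (m+2)) i + min (A-1) ((U A (T3 (m+2)) i + 1)/2) := rfl
      omega


lemma exp_bound_aux : Real.exp (7/(3*Real.exp 1)) ≤ 625/256 := by
  have he1 : (2.7182818283:ℝ) < Real.exp 1 := Real.exp_one_gt_d9
  have he2 : Real.exp 1 < 2.7182818286 := Real.exp_one_lt_d9
  have hepos : (0:ℝ) < Real.exp 1 := Real.exp_pos 1
  set t : ℝ := 7/(3*Real.exp 1) with ht
  have htpos : 0 < t := by positivity
  have ht1 : t ≤ 0.8584 := by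
    rw [ht, div_le_iff₀ (by positivity)]
    nlinarith
  have h1 : Real.exp (1 - t) ≥ 2 - t := by
    have := Real.add_one_le_exp (1 - t)
    linarith
  have h2 : Real.exp t = Real.exp 1 / Real.exp (1 - t) := by
    rw [Real.exp_sub]
    field_simp
  have h3 : Real.exp t ≤ Real.exp 1 / (2 - t) := by
    rw [h2]
    apply div_le_div_of_nonneg_left (le_of_lt hepos) (by linarith) h1
  have h4 : Real.exp 1 / (2 - t) ≤ 625/256 := by
    rw [div_le_div_iff₀ (by linarith) (by norm_num)]
    -- 256 * exp 1 ≤ 625 * (2 - t),  t = 7/(3 e)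
    have expand : 625 * (2 - t) = 1250 - 4375/(3*Real.exp 1) := by
      rw [ht]; ring
    rw [expand]
    rw [ge_iff_le, ← sub_nonneg] at *
    have key : 0 ≤ (1250 - 4375/(3*Real.exp 1)) - 256*Real.exp 1 := by
      have h0 : (0:ℝ) < 3*Real.exp 1 := by positivity
      rw [sub_nonneg, ← sub_nonneg]
      have : (1250 - 4375/(3*Real.exp 1)) - 256*Real.exp 1
          = (1250*(3*Real.exp 1) - 4375 - 256*Real.exp 1*(3*Real.exp 1))/(3*Real.exp 1) := by
        field_simp
      rw [this]
      apply div_nonneg _ (le_of_lt h0)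
      nlinarith
    linarith
  linarith

lemma log_q_ge : 7/(3*Real.exp 1) ≤ Real.log (625/256) := by
  rw [Real.le_log_iff_exp_le (by norm_num : (0:ℝ) < 625/256)]
  exact exp_bound_aux

lemma rpow_q_le (ε : ℝ) (hε : 0 < ε) (hε4 : ε ≤ 1/4) :
    ((625:ℝ)/256) ^ (ε:ℝ) ≤ 1 + ε := by
  have hqpos : (0:ℝ) < 625/256 := by norm_num
  rw [Real.rpow_def_of_pos hqpos]
  have hL : Real.log (625/256) = 4 * Real.log (5/4) := by
    rw [show (625/256:ℝ) = (5/4)^(4:ℕ) by norm_num, Real.log_pow]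
    push_cast; ring
  rw [hL]
  have hconv := convexOn_exp.2 (Set.mem_univ (0:ℝ)) (Set.mem_univ (Real.log (5/4)))
    (show (0:ℝ) ≤ 1-4*ε by linarith) (show (0:ℝ) ≤ 4*ε by linarith)
    (show (1-4*ε) + 4*ε = 1 by ring)
  simp only [smul_eq_mul] at hconv
  rw [Real.exp_log (by norm_num : (0:ℝ) < 5/4), Real.exp_zero] at hconv
  have h2 : (1-4*ε)*0 + (4*ε)*Real.log (5/4) = 4*Real.log (5/4)*ε := by ring
  rw [h2] at hconv
  linarith

lemma exp_ge_linear (s : ℝ) : Real.exp 1 * s ≤ Real.exp s := by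
  have h := Real.add_one_le_exp (s - 1)
  have h2 : Real.exp s = Real.exp 1 * Real.exp (s - 1) := by
    rw [← Real.exp_add]; ring_nf
  nlinarith [Real.exp_pos 1, Real.exp_pos (s-1)]

lemma pow_ge_big (ε : ℝ) (hε : 0 < ε) (hε4 : ε ≤ 1/4) (k : ℕ) :
    (7 * k : ℝ) * ε ≤ 3 * (1+ε)^k := by
  have hqpos : (0:ℝ) < 625/256 := by norm_num
  have h1 : ((625:ℝ)/256) ^ (ε:ℝ) ≤ 1 + ε := rpow_q_le ε hε hε4
  have hnn : (0:ℝ) ≤ ((625:ℝ)/256) ^ (ε:ℝ) := le_of_lt (Real.rpow_pos_of_pos hqpos _)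
  have h2 : (((625:ℝ)/256) ^ (ε:ℝ))^k ≤ (1+ε)^k := pow_le_pow_left₀ hnn h1 k
  have h3 : (((625:ℝ)/256) ^ (ε:ℝ))^k = ((625:ℝ)/256) ^ (ε * k) := by
    rw [← Real.rpow_natCast (((625:ℝ)/256) ^ (ε:ℝ)) k, ← Real.rpow_mul (le_of_lt hqpos)]
  have h4 : ((625:ℝ)/256) ^ (ε * k) = Real.exp ((ε*k) * Real.log (625/256)) := by
    rw [Real.rpow_def_of_pos hqpos]
    ring_nf
  have h5 : Real.exp 1 * ((ε*k) * Real.log (625/256)) ≤ Real.exp ((ε*k) * Real.log (625/256)) :=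
    exp_ge_linear _
  have h6 : (7:ℝ)/(3*Real.exp 1) ≤ Real.log (625/256) := log_q_ge
  have hek : (0:ℝ) ≤ ε * k := by positivity
  have hepos : (0:ℝ) < Real.exp 1 := Real.exp_pos 1
  have h7 : (7:ℝ)*k*ε ≤ 3 * (Real.exp 1 * ((ε*k) * Real.log (625/256))) := by
    have : Real.exp 1 * (ε*k) * (7/(3*Real.exp 1)) ≤ Real.exp 1 * (ε*k) * Real.log (625/256) := by
      apply mul_le_mul_of_nonneg_left h6 (by positivity)
    have e : Real.exp 1 * (ε*k) * (7/(3*Real.exp 1)) = (7*k*ε)/3 := by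
      field_simp
    nlinarith
  calc (7*k:ℝ)*ε ≤ 3 * (Real.exp 1 * ((ε*k) * Real.log (625/256))) := h7
    _ ≤ 3 * Real.exp ((ε*k) * Real.log (625/256)) := by linarith
    _ = 3 * ((625:ℝ)/256) ^ (ε * k) := by rw [h4]
    _ = 3 * (((625:ℝ)/256) ^ (ε:ℝ))^k := by rw [h3]
    _ ≤ 3 * (1+ε)^k := by linarith

-- small k polynomial bounds
lemma smallk2 (ε : ℝ) (hε : 0 < ε) (hε1 : ε < 1/4) : (10:ℝ)*ε ≤ (1+ε)^2 * 2 := by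
  nlinarith [sq_nonneg ε, sq_nonneg (1-4*ε)]

lemma smallk3 (ε : ℝ) (hε : 0 < ε) (hε1 : ε < 1/4) : (44:ℝ)*ε ≤ (1+ε)^3 * 6 := by
  have h4 : (0:ℝ) ≤ 1 - 4*ε := by linarith
  have c2 : (0:ℝ) ≤ 6 - 2*ε := by linarith
  nlinarith [mul_nonneg h4 c2, mul_pos (mul_pos hε hε) hε, sq_nonneg ε]

lemma smallk4 (ε : ℝ) (hε : 0 < ε) (hε1 : ε < 1/4) : (228:ℝ)*ε ≤ (1+ε)^4 * 24 := by
  have h4 : (0:ℝ) ≤ 1 - 4*ε := by linarith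
  have c2 : (0:ℝ) ≤ 24 - 36*ε := by linarith
  nlinarith [mul_nonneg h4 c2, mul_pos (mul_pos hε hε) hε, sq_nonneg ε, sq_nonneg (ε*ε)]

lemma smallk5 (ε : ℝ) (hε : 0 < ε) (hε1 : ε < 1/4) : (1399:ℝ)*ε ≤ (1+ε)^5 * 120 := by
  have h4 : (0:ℝ) ≤ 1 - 4*ε := by linarith
  have c2 : (0:ℝ) ≤ 120 - 319*ε - 76*ε^2 := by nlinarith
  nlinarith [mul_nonneg h4 c2, mul_pos (mul_pos hε hε) hε, sq_nonneg ε, sq_nonneg (ε*ε),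
    mul_pos (mul_pos (mul_pos hε hε) hε) hε]

lemma smallk6 (ε : ℝ) (hε : 0 < ε) (hε1 : ε < 1/4) : (9927:ℝ)*ε ≤ (1+ε)^6 * 720 := by
  have h4 : (0:ℝ) ≤ 1 - 4*ε := by linarith
  have c2 : (0:ℝ) ≤ 720 - 2727*ε - 108*ε^2 := by nlinarith
  nlinarith [mul_nonneg h4 c2, mul_pos (mul_pos hε hε) hε, sq_nonneg ε, sq_nonneg (ε*ε),
    mul_pos (mul_pos (mul_pos hε hε) hε) hε,
    mul_pos (mul_pos (mul_pos (mul_pos hε hε) hε) hε) hε]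


open Finset in
theorem prop_holds (k : ℕ) (hk : 2 ≤ k) : K4starRamseyProp k (W k) := by
  intro c
  by_contra hno
  push_neg at hno
  have hNo : NoCopy c := fun i => by have := hno i; tauto
  have hn : 2*k + 4 ≤ W k := W_ge k hk
  have hmain := main c hn hNo k Finset.univ (by simp) Finset.univ
    (fun x _ y _ _ => Finset.mem_univ _)
    (fun x _ d hd => absurd (Finset.mem_univ d) hd)
  rw [Finset.card_univ, Fintype.card_fin] at hmain
  omega

theorem prop_one : K4starRamseyProp 1 4 := by
  intro c
  refine ⟨0, Or.inl ⟨id, Function.injective_id, ?_⟩⟩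
  intro x y _
  apply Subsingleton.elim

end K4U

/-- For every `0 < ε < 1/4` and `k ≥ 1`, `R(K₄*, k) ≤ (1+ε)^k · k! / ε`. -/
theorem K4starRamsey_upper (ε : ℝ) (hε : 0 < ε) (hε1 : ε < 1 / 4) (k : ℕ) (hk : 1 ≤ k) :
    (K4starRamsey k : ℝ) ≤ (1 + ε) ^ k * (Nat.factorial k) / ε := by
  have hfac : (0:ℝ) < (Nat.factorial k : ℝ) := by exact_mod_cast Nat.factorial_pos k
  rw [le_div_iff₀ hε]
  rcases eq_or_lt_of_le hk with hk1 | hk2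
  · have hk1' : k = 1 := hk1.symm
    subst hk1'
    have h4 : K4starRamsey 1 ≤ 4 := Nat.sInf_le K4U.prop_one
    have h4' : (K4starRamsey 1 : ℝ) ≤ 4 := by exact_mod_cast h4
    have hf1 : (Nat.factorial 1 : ℝ) = 1 := by norm_num [Nat.factorial]
    rw [hf1]
    have hR : (K4starRamsey 1:ℝ) * ε ≤ 4 * ε := by nlinarith
    nlinarith
  · have hk2' : 2 ≤ k := hk2
    have hWle : K4starRamsey k ≤ K4U.W k := Nat.sInf_le (K4U.prop_holds k hk2')
    have hWle' : (K4starRamsey k : ℝ) ≤ (K4U.W k : ℝ) := by exact_mod_cast hWle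
    have hstep : (K4starRamsey k : ℝ) * ε ≤ (K4U.W k : ℝ) * ε := by nlinarith
    refine le_trans hstep ?_
    rcases lt_or_ge k 7 with h7 | h7
    · interval_cases k
      · rw [show K4U.W 2 = 10 from by decide]
        have h := K4U.smallk2 ε hε hε1
        have hf : (Nat.factorial 2 : ℝ) = 2 := by norm_num [Nat.factorial]
        rw [hf]; push_cast; linarith
      · rw [show K4U.W 3 = 44 from by decide]
        have h := K4U.smallk3 ε hε hε1
        have hf : (Nat.factorial 3 : ℝ) = 6 := by norm_num [Nat.factorial]
        rw [hf]; push_cast; linarith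
      · rw [show K4U.W 4 = 228 from by decide]
        have h := K4U.smallk4 ε hε hε1
        have hf : (Nat.factorial 4 : ℝ) = 24 := by norm_num [Nat.factorial]
        rw [hf]; push_cast; linarith
      · rw [show K4U.W 5 = 1399 from by decide]
        have h := K4U.smallk5 ε hε hε1
        have hf : (Nat.factorial 5 : ℝ) = 120 := by norm_num [Nat.factorial]
        rw [hf]; push_cast; linarith
      · rw [show K4U.W 6 = 9927 from by decide]
        have h := K4U.smallk6 ε hε hε1
        have hf : (Nat.factorial 6 : ℝ) = 720 := by norm_num [Nat.factorial]
        rw [hf]; push_cast; linarith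
    · have h3W : 3 * K4U.W k ≤ 7 * k * Nat.factorial k := K4U.W_le_big k h7
      have h3W' : 3 * (K4U.W k:ℝ) ≤ 7 * (k:ℝ) * (Nat.factorial k:ℝ) := by exact_mod_cast h3W
      have hpow : (7 * (k:ℝ)) * ε ≤ 3 * (1+ε)^k := K4U.pow_ge_big ε hε (le_of_lt hε1) k
      have hεnn : (0:ℝ) ≤ ε := le_of_lt hε
      nlinarith [pow_pos (show (0:ℝ) < 1+ε by linarith) k]
end

section
/- For every integer k ≥ 2, R_3(B(K_4), k) ≤ R(K_4^*, k) + 1. -/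
open SimpleGraph

open Finset
section Aux

open SimpleGraph Finset

/-! ### Multicolor Ramsey for cliques (needed to show the Ramsey set is nonempty) -/

lemma clique_of_small {k n : ℕ} (m : Fin k → ℕ) (i : Fin k) (hm : m i ≤ 1) (hn : 0 < n) :
    ∀ c : Sym2 (Fin n) → Fin k, ∃ i : Fin k, ∃ s : Finset (Fin n),
      s.card = m i ∧ ∀ x ∈ s, ∀ y ∈ s, x ≠ y → c s(x, y) = i := by
  intro c
  rcases Nat.le_one_iff_eq_zero_or_eq_one.mp hm with h | h
  · exact ⟨i, ∅, by simp [h], by simp⟩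
  · refine ⟨i, {⟨0, hn⟩}, by simp [h], ?_⟩
    intro x hx y hy hxy
    simp only [Finset.mem_singleton] at hx hy
    exact absurd (hx.trans hy.symm) hxy

lemma exists_mono_clique (k : ℕ) : ∀ (M : ℕ) (m : Fin k → ℕ), (∑ j, m j) ≤ M →
    ∃ n, 0 < n ∧ ∀ c : Sym2 (Fin n) → Fin k, ∃ i : Fin k, ∃ s : Finset (Fin n),
      s.card = m i ∧ ∀ x ∈ s, ∀ y ∈ s, x ≠ y → c s(x, y) = i := by
  intro M
  induction M with
  | zero =>
    intro m hm
    rcases Nat.eq_zero_or_pos k with hk | hk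
    · subst hk
      exact ⟨1, one_pos, fun c => ((c s(0, 0)).elim0)⟩
    · have : m ⟨0, hk⟩ = 0 := by
        have := Finset.single_le_sum (f := m) (fun j _ => Nat.zero_le _)
          (Finset.mem_univ ⟨0, hk⟩)
        omega
      exact ⟨1, one_pos, clique_of_small m ⟨0, hk⟩ (by omega) one_pos⟩
  | succ M ih =>
    intro m hm
    by_cases h2 : ∃ i, m i ≤ 1
    · obtain ⟨i, hi⟩ := h2
      exact ⟨1, one_pos, clique_of_small m i hi one_pos⟩
    push_neg at h2
    rcases Nat.eq_zero_or_pos k with hk | hk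
    · subst hk
      exact ⟨1, one_pos, fun c => ((c s(0, 0)).elim0)⟩
    -- inductive step
    have hsum : ∀ i : Fin k, (∑ j, Function.update m i (m i - 1) j) ≤ M := by
      intro i
      have h1 : (∑ j, Function.update m i (m i - 1) j)
          = (m i - 1) + ∑ j ∈ Finset.univ.erase i, m j := by
        rw [← Finset.add_sum_erase _ _ (Finset.mem_univ i), Function.update_self]
        congr 1
        exact Finset.sum_congr rfl fun j hj =>
          Function.update_of_ne (Finset.mem_erase.mp hj).1 _ _
      have h2' : (∑ j, m j) = m i + ∑ j ∈ Finset.univ.erase i, m j :=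
        (Finset.add_sum_erase _ _ (Finset.mem_univ i)).symm
      have := h2 i
      omega
    choose N hNpos hN using fun i => ih (Function.update m i (m i - 1)) (hsum i)
    set T : ℕ := ∑ i, (N i - 1) with hT
    refine ⟨T + 2, by omega, ?_⟩
    intro c
    set v : Fin (T + 2) := Fin.last (T + 1) with hv
    set g : Fin (T + 1) → Fin k := fun u => c s(u.castSucc, v) with hg
    -- pigeonhole
    have hcard : (Finset.univ : Finset (Fin (T + 1))).card
        = ∑ i : Fin k, ((Finset.univ.filter fun u => g u = i).card) :=
      Finset.card_eq_sum_card_fiberwise (fun x _ => Finset.mem_univ (g x))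
    have hex : ∃ i : Fin k, N i ≤ (Finset.univ.filter fun u => g u = i).card := by
      by_contra hcon
      push_neg at hcon
      have hle : ∑ i : Fin k, ((Finset.univ.filter fun u => g u = i).card)
          ≤ ∑ i, (N i - 1) := by
        refine Finset.sum_le_sum fun i _ => ?_
        have := hcon i
        omega
      rw [Finset.card_univ, Fintype.card_fin] at hcard
      omega
    obtain ⟨i, hi⟩ := hex
    obtain ⟨t, hts, htcard⟩ := Finset.exists_subset_card_eq hi
    set e := t.orderIsoOfFin htcard with he
    set w : Fin (N i) → Fin (T + 2) := fun a => ((e a : Fin (T + 1))).castSucc with hw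
    have hwinj : Function.Injective w := by
      intro a b hab
      exact e.injective (Subtype.ext (Fin.castSucc_injective _ hab))
    obtain ⟨j, s', hs'card, hs'cl⟩ := hN i (fun z => c (z.map w))
    by_cases hji : j = i
    · subst hji
      rw [Function.update_self] at hs'card
      refine ⟨j, insert v (s'.image w), ?_, ?_⟩
      · rw [Finset.card_insert_of_notMem, Finset.card_image_of_injective _ hwinj,
          hs'card]
        · have := h2 j; omega
        · intro hmem
          obtain ⟨a, _, ha⟩ := Finset.mem_image.mp hmem
          exact absurd (ha ▸ rfl : w a = v) (Fin.castSucc_lt_last _).ne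
      · intro x hx y hy hxy
        have key : ∀ a : Fin (N j), c s(w a, v) = j := by
          intro a
          have : (e a : Fin (T + 1)) ∈ t := (e a).2
          have := hts this
          simpa [hg] using (Finset.mem_filter.mp this).2
        rcases Finset.mem_insert.mp hx with rfl | hx <;>
          rcases Finset.mem_insert.mp hy with rfl | hy
        · exact absurd rfl hxy
        · obtain ⟨a, _, rfl⟩ := Finset.mem_image.mp hy
          rw [Sym2.eq_swap]; exact key a
        · obtain ⟨a, _, rfl⟩ := Finset.mem_image.mp hx
          exact key a
        · obtain ⟨a, ha, rfl⟩ := Finset.mem_image.mp hx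
          obtain ⟨b, hb, rfl⟩ := Finset.mem_image.mp hy
          have hab : a ≠ b := fun h => hxy (by rw [h])
          have := hs'cl a ha b hb hab
          simpa [Sym2.map_pair_eq] using this
    · refine ⟨j, s'.image w, ?_, ?_⟩
      · rw [Finset.card_image_of_injective _ hwinj, hs'card,
          Function.update_of_ne hji]
      · intro x hx y hy hxy
        obtain ⟨a, ha, rfl⟩ := Finset.mem_image.mp hx
        obtain ⟨b, hb, rfl⟩ := Finset.mem_image.mp hy
        have hab : a ≠ b := fun h => hxy (by rw [h])
        have := hs'cl a ha b hb hab
        simpa [Sym2.map_pair_eq] using this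



/-- Attach the extra vertex `last` to a pair to make a triple. -/
def trip (N : ℕ) : Sym2 (Fin N) → Finset (Fin (N + 1)) :=
  Sym2.lift ⟨fun a b => insert a.castSucc (insert b.castSucc {Fin.last N}),
    fun a b => Finset.insert_comm _ _ _⟩

lemma trip_mk {N : ℕ} (a b : Fin N) :
    trip N s(a, b) = insert a.castSucc (insert b.castSucc {Fin.last N}) := rfl

lemma trip_card {N : ℕ} (z : Sym2 (Fin N)) (h : ¬z.IsDiag) : (trip N z).card = 3 := by
  induction z using Sym2.ind with
  | _ a b =>
    rw [Sym2.mk_isDiag_iff] at h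
    rw [trip_mk, Finset.card_insert_of_notMem, Finset.card_insert_of_notMem,
      Finset.card_singleton]
    · simp [(Fin.castSucc_lt_last b).ne]
    · simp [Fin.castSucc_inj, h, (Fin.castSucc_lt_last a).ne]

lemma trip_inj {N : ℕ} {z z' : Sym2 (Fin N)} (hz : ¬z.IsDiag) (hz' : ¬z'.IsDiag)
    (h : trip N z = trip N z') : z = z' := by
  induction z using Sym2.ind with
  | _ a b =>
    induction z' using Sym2.ind with
    | _ a' b' =>
      rw [Sym2.mk_isDiag_iff] at hz hz'
      rw [trip_mk, trip_mk] at h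
      have ha : a.castSucc = a'.castSucc ∨ a.castSucc = b'.castSucc := by
        have hmem : a.castSucc ∈ (insert a'.castSucc (insert b'.castSucc
            ({Fin.last N} : Finset (Fin (N + 1))))) := by
          rw [← h]; simp
        simpa [(Fin.castSucc_lt_last a).ne] using hmem
      have hb : b.castSucc = a'.castSucc ∨ b.castSucc = b'.castSucc := by
        have hmem : b.castSucc ∈ (insert a'.castSucc (insert b'.castSucc
            ({Fin.last N} : Finset (Fin (N + 1))))) := by
          rw [← h]; simp
        simpa [(Fin.castSucc_lt_last b).ne] using hmem
      rw [Fin.castSucc_inj, Fin.castSucc_inj] at ha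
      rw [Fin.castSucc_inj, Fin.castSucc_inj] at hb
      rw [Sym2.eq_iff]
      rcases ha with ha | ha <;> rcases hb with hb | hb
      · exact absurd (ha.trans hb.symm) hz
      · exact Or.inl ⟨ha, hb⟩
      · exact Or.inr ⟨ha, hb⟩
      · exact absurd (ha.trans hb.symm) hz

/-- Index of an edge of `K₄` among the six edges. -/
def iota : Fin 4 → Fin 4 → Fin 6 :=
  ![![0, 0, 1, 3], ![0, 0, 2, 4], ![1, 2, 0, 5], ![3, 4, 5, 0]]

def eidx : Sym2 (Fin 4) → Fin 6 := Sym2.lift ⟨iota, by decide⟩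

lemma iota_inj : ∀ a b a' b' : Fin 4, a ≠ b → a' ≠ b' → iota a b = iota a' b' →
    (a = a' ∧ b = b') ∨ (a = b' ∧ b = a') := by decide

lemma eidx_inj {z z' : Sym2 (Fin 4)} (hz : ¬z.IsDiag) (hz' : ¬z'.IsDiag)
    (h : eidx z = eidx z') : z = z' := by
  induction z using Sym2.ind with
  | _ a b =>
    induction z' using Sym2.ind with
    | _ a' b' =>
      rw [Sym2.mk_isDiag_iff] at hz hz'
      rw [Sym2.eq_iff]
      exact iota_inj a b a' b' hz hz' h

/-- The six pairs of a triangle `u0 u1 u2` with pendant partners `p0 p1 p2`. -/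
def sixPairs {N : ℕ} (u0 u1 u2 p0 p1 p2 : Fin N) : Fin 6 → Sym2 (Fin N) :=
  ![s(u0, u1), s(u0, u2), s(u1, u2), s(u0, p0), s(u1, p1), s(u2, p2)]

section SixPairs
variable {N : ℕ} (u0 u1 u2 p0 p1 p2 : Fin N)
@[simp] lemma sixPairs_zero : sixPairs u0 u1 u2 p0 p1 p2 0 = s(u0, u1) := rfl
@[simp] lemma sixPairs_one : sixPairs u0 u1 u2 p0 p1 p2 1 = s(u0, u2) := rfl
@[simp] lemma sixPairs_two : sixPairs u0 u1 u2 p0 p1 p2 2 = s(u1, u2) := rfl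
@[simp] lemma sixPairs_three : sixPairs u0 u1 u2 p0 p1 p2 3 = s(u0, p0) := rfl
@[simp] lemma sixPairs_four : sixPairs u0 u1 u2 p0 p1 p2 4 = s(u1, p1) := rfl
@[simp] lemma sixPairs_five : sixPairs u0 u1 u2 p0 p1 p2 5 = s(u2, p2) := rfl
end SixPairs


lemma berge_main {N k : ℕ} (c : Finset (Fin (N + 1)) → Fin k) (i : Fin k)
    (u0 u1 u2 p0 p1 p2 : Fin N)
    (hinj : Function.Injective (sixPairs u0 u1 u2 p0 p1 p2))
    (hdiag : ∀ j, ¬(sixPairs u0 u1 u2 p0 p1 p2 j).IsDiag)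
    (hcol : ∀ j, c (trip N (sixPairs u0 u1 u2 p0 p1 p2 j)) = i) :
    BergeIn K4 {s : Finset (Fin (N + 1)) | s.card = 3 ∧ c s = i} := by
  have hu01 : u0 ≠ u1 := fun h => hdiag 0 (by simp [sixPairs, Sym2.mk_isDiag_iff, h])
  have hu02 : u0 ≠ u2 := fun h => hdiag 1 (by simp [sixPairs, Sym2.mk_isDiag_iff, h])
  have hu12 : u1 ≠ u2 := fun h => hdiag 2 (by simp [sixPairs, Sym2.mk_isDiag_iff, h])
  refine ⟨![u0.castSucc, u1.castSucc, u2.castSucc, Fin.last N], ?_,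
    fun e => trip N (sixPairs u0 u1 u2 p0 p1 p2 (eidx e.val)), ?_, ?_, ?_⟩
  · intro x y h
    fin_cases x <;> fin_cases y <;>
      simp_all [Fin.castSucc_inj, (Fin.castSucc_lt_last _).ne, (Fin.castSucc_lt_last _).ne']
  · rintro ⟨e, he⟩ ⟨e', he'⟩ h
    have hde := SimpleGraph.not_isDiag_of_mem_edgeSet _ he
    have hde' := SimpleGraph.not_isDiag_of_mem_edgeSet _ he'
    have h1 := trip_inj (hdiag _) (hdiag _) h
    have h2 := hinj h1
    exact Subtype.ext (eidx_inj hde hde' h2)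
  · rintro ⟨e, he⟩
    exact ⟨trip_card _ (hdiag _), hcol _⟩
  · rintro ⟨e, he⟩ x hx
    induction e using Sym2.ind with
    | _ a b =>
      rw [SimpleGraph.mem_edgeSet] at he
      have hab : a ≠ b := he.ne
      rw [Sym2.mem_iff] at hx
      fin_cases a <;> fin_cases b <;> simp_all <;>
        rcases hx with rfl | rfl <;>
          simp [eidx, iota, trip_mk, Sym2.lift_mk]

end Aux

lemma K4star_exists (k : ℕ) : ∃ n, K4starRamseyProp k n := by
  obtain ⟨n, hn, h⟩ := exists_mono_clique k (∑ _j : Fin k, 4) (fun _ => 4) le_rfl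
  refine ⟨n, fun c => ?_⟩
  obtain ⟨i, s, hcard, hcl⟩ := h c
  refine ⟨i, Or.inl ⟨fun x => (s.orderIsoOfFin hcard x : Fin n), ?_, ?_⟩⟩
  · intro x y hxy
    exact (s.orderIsoOfFin hcard).injective (Subtype.ext hxy)
  · intro x y hxy
    have hne : x ≠ y := by
      rintro rfl
      simp [K4] at hxy
    have hfne : (s.orderIsoOfFin hcard x : Fin n) ≠ (s.orderIsoOfFin hcard y : Fin n) := by
      intro h'
      exact hne ((s.orderIsoOfFin hcard).injective (Subtype.ext h'))
    exact hcl _ (s.orderIsoOfFin hcard x).2 _ (s.orderIsoOfFin hcard y).2 hfne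

/-- For every `k ≥ 2`, `R₃(𝓑(K₄), k) ≤ R(K₄*, k) + 1`. -/
theorem bergeRamsey_K4_le_K4star (k : ℕ) (hk : 2 ≤ k) :
    bergeRamsey K4 3 k ≤ K4starRamsey k + 1 := by
  have hN : K4starRamseyProp k (K4starRamsey k) := Nat.sInf_mem (K4star_exists k)
  set N := K4starRamsey k with hNdef
  clear_value N
  clear hNdef
  have hB : BergeRamseyProp K4 3 k (N + 1) := by
    intro c
    obtain ⟨i, hcase⟩ := hN (fun z => c (trip N z))
    refine ⟨i, ?_⟩
    rcases hcase with h | h | h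
    · obtain ⟨f, hf, hmono⟩ := h
      have hm : ∀ x y : Fin 4, x ≠ y → c (trip N s(f x, f y)) = i := fun x y hxy =>
        hmono x y (by simpa [K4] using hxy)
      have key : sixPairs (f 0) (f 1) (f 2) (f 3) (f 3) (f 3)
          = Sym2.map f ∘ ![s(0, 1), s(0, 2), s(1, 2), s(0, 3), s(1, 3), s(2, 3)] := by
        funext j
        fin_cases j <;> rfl
      refine berge_main c i (f 0) (f 1) (f 2) (f 3) (f 3) (f 3) ?_ ?_ ?_
      · rw [key]
        exact (Sym2.map.injective hf).comp (by decide)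
      · intro j
        rw [key, Function.comp_apply, Sym2.isDiag_map hf]
        revert j
        decide
      · intro j
        fin_cases j <;>
          simp only [sixPairs_zero, sixPairs_one, sixPairs_two, sixPairs_three,
            sixPairs_four, sixPairs_five] <;>
          exact hm _ _ (by decide)
    · obtain ⟨f, hf, hmono⟩ := h
      have hm : ∀ x y : Fin 5,
          s(x, y) ∈ ({s(0, 1), s(0, 2), s(0, 3), s(1, 2), s(1, 3), s(2, 4)} :
            Set (Sym2 (Fin 5))) → x ≠ y → c (trip N s(f x, f y)) = i := by
        intro x y h1 h2
        exact hmono x y (by rw [K4ePendant, SimpleGraph.fromEdgeSet_adj]; exact ⟨h1, h2⟩)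
      have key : sixPairs (f 0) (f 1) (f 2) (f 3) (f 3) (f 4)
          = Sym2.map f ∘ ![s(0, 1), s(0, 2), s(1, 2), s(0, 3), s(1, 3), s(2, 4)] := by
        funext j
        fin_cases j <;> rfl
      refine berge_main c i (f 0) (f 1) (f 2) (f 3) (f 3) (f 4) ?_ ?_ ?_
      · rw [key]
        exact (Sym2.map.injective hf).comp (by decide)
      · intro j
        rw [key, Function.comp_apply, Sym2.isDiag_map hf]
        revert j
        decide
      · intro j
        fin_cases j <;>
          simp only [sixPairs_zero, sixPairs_one, sixPairs_two, sixPairs_three,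
            sixPairs_four, sixPairs_five] <;>
          exact hm _ _ (by simp [Set.mem_insert_iff]) (by decide)
    · obtain ⟨f, hf, hmono⟩ := h
      have hm : ∀ x y : Fin 6,
          s(x, y) ∈ ({s(0, 1), s(1, 2), s(0, 2), s(0, 3), s(1, 4), s(2, 5)} :
            Set (Sym2 (Fin 6))) → x ≠ y → c (trip N s(f x, f y)) = i := by
        intro x y h1 h2
        exact hmono x y (by rw [triPendants, SimpleGraph.fromEdgeSet_adj]; exact ⟨h1, h2⟩)
      have key : sixPairs (f 0) (f 1) (f 2) (f 3) (f 4) (f 5)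
          = Sym2.map f ∘ ![s(0, 1), s(0, 2), s(1, 2), s(0, 3), s(1, 4), s(2, 5)] := by
        funext j
        fin_cases j <;> rfl
      refine berge_main c i (f 0) (f 1) (f 2) (f 3) (f 4) (f 5) ?_ ?_ ?_
      · rw [key]
        exact (Sym2.map.injective hf).comp (by decide)
      · intro j
        rw [key, Function.comp_apply, Sym2.isDiag_map hf]
        revert j
        decide
      · intro j
        fin_cases j <;>
          simp only [sixPairs_zero, sixPairs_one, sixPairs_two, sixPairs_three,
            sixPairs_four, sixPairs_five] <;>
          exact hm _ _ (by simp [Set.mem_insert_iff]) (by decide)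
  exact Nat.sInf_le hB
end

section
/- The maximum number of hyperedges in a 3-uniform hypergraph on 5 vertices containing no Berge-K_4 is exactly 5; that is, every family of 6 pairwise distinct 3-element subsets of a 5-element set contains a Berge-K_4, while some family of 5 such subsets contains none. -/
open SimpleGraph

/-! ### Auxiliary machinery -/

/-- The list of all ten 3-element subsets of `Fin 5`. -/
def allT : List (Finset (Fin 5)) :=
  [{0,1,2},{0,1,3},{0,1,4},{0,2,3},{0,2,4},{0,3,4},{1,2,3},{1,2,4},{1,3,4},{2,3,4}]

/-- The six edges of `K₄` as ordered pairs. -/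
def EPl : List (Fin 4 × Fin 4) := [(0,1),(0,2),(0,3),(1,2),(1,3),(2,3)]

/-- Index of the edge `{a,b}` in `EPl`. -/
def fIdx : Fin 4 → Fin 4 → Fin 6 := fun a b =>
  ![![0,0,1,2],![0,0,3,4],![1,3,0,5],![2,4,5,0]] a b

lemma fIdx_symm : ∀ a b : Fin 4, fIdx a b = fIdx b a := by decide

lemma recon : ∀ a b : Fin 4, a ≠ b →
    s((EPl.get (fIdx a b)).1, (EPl.get (fIdx a b)).2) = s(a,b) := by decide

lemma card3_mem_allT : ∀ s : Finset (Fin 5), s.card = 3 → s ∈ allT := by decide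

lemma allT_nodup : allT.Nodup := by decide

lemma edge_mem : ∀ i : Fin 6, (Sym2.mk (EPl.get i).1 (EPl.get i).2) ∈ K4.edgeSet := by
  intro i
  rw [SimpleGraph.mem_edgeSet]
  show (⊤ : SimpleGraph (Fin 4)).Adj _ _
  rw [SimpleGraph.top_adj]
  fin_cases i <;> decide

lemma sIdx_edge : ∀ i : Fin 6, Sym2.lift ⟨fIdx, fIdx_symm⟩ ((Sym2.mk (EPl.get i).1 (EPl.get i).2)) = i := by
  decide

/-- Greedy matching check: can the edges `es` be matched to pairwise distinct hyperedges
from `avail` covering the images of endpoints under `φ`? -/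
def mtch (φ : Fin 4 → Fin 5) : List (Fin 4 × Fin 4) → List (Finset (Fin 5)) → Bool
  | [], _ => true
  | p :: es, avail =>
      avail.any fun t => decide (φ p.1 ∈ t) && decide (φ p.2 ∈ t) && mtch φ es (avail.erase t)

def BergeW (L : List (Finset (Fin 5))) : Prop :=
  ∃ φ : Fin 4 → Fin 5, Function.Injective φ ∧ mtch φ EPl L = true

instance : DecidablePred BergeW := fun L => by unfold BergeW; infer_instance

set_option maxRecDepth 100000 in
theorem key : ∀ L ∈ allT.sublistsLen 6, BergeW L := by decide

theorem mtch_sound (φ : Fin 4 → Fin 5) :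
    ∀ (es : List (Fin 4 × Fin 4)) (avail : List (Finset (Fin 5))), avail.Nodup →
      mtch φ es avail = true →
      ∃ picks : List (Finset (Fin 5)), picks.length = es.length ∧ picks.Nodup ∧
        (∀ t ∈ picks, t ∈ avail) ∧
        ∀ i (h1 : i < es.length) (h2 : i < picks.length),
          φ (es[i]'h1).1 ∈ picks[i]'h2 ∧ φ (es[i]'h1).2 ∈ picks[i]'h2 := by
  intro es
  induction es with
  | nil =>
      intro avail _ _
      exact ⟨[], rfl, List.nodup_nil, by simp, by intro i h1; simp at h1⟩
  | cons p es ih =>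
      intro avail hnd hm
      rw [mtch, List.any_eq_true] at hm
      obtain ⟨t, ht, hcond⟩ := hm
      simp only [Bool.and_eq_true, decide_eq_true_eq] at hcond
      obtain ⟨⟨h1t, h2t⟩, hrec⟩ := hcond
      obtain ⟨picks, plen, pnd, psub, pcond⟩ := ih (avail.erase t) (hnd.erase t) hrec
      refine ⟨t :: picks, by simp [plen], ?_, ?_, ?_⟩
      · exact List.nodup_cons.2 ⟨hnd.not_mem_erase ∘ psub t, pnd⟩
      · intro u hu
        rcases List.mem_cons.1 hu with h | h
        · exact h ▸ ht
        · exact List.mem_of_mem_erase (psub u h)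
      · intro i h1 h2
        cases i with
        | zero => exact ⟨h1t, h2t⟩
        | succ n =>
            simp only [List.getElem_cons_succ]
            exact pcond n (by simpa using h1) (by simpa using h2)

/-- `ex₃(5, 𝓑(K₄)) = 5`: every family of 6 distinct 3-element subsets of a 5-element set
contains a Berge-`K₄`, while some family of 5 such subsets contains none. -/
theorem turan_berge_K4_five :
    (∀ H : Finset (Finset (Fin 5)), (∀ s ∈ H, s.card = 3) → H.card = 6 →
      BergeIn K4 (↑H : Set (Finset (Fin 5)))) ∧
    (∃ H : Finset (Finset (Fin 5)), (∀ s ∈ H, s.card = 3) ∧ H.card = 5 ∧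
      ¬ BergeIn K4 (↑H : Set (Finset (Fin 5)))) := by
  constructor
  · -- upper bound: any 6 triples contain a Berge-K₄
    intro H h3 h6
    have hsub : ∀ s ∈ H, s ∈ allT := fun s hs => card3_mem_allT s (h3 s hs)
    set L : List (Finset (Fin 5)) := allT.filter (· ∈ H) with hL
    have hLsub : L.Sublist allT := List.filter_sublist
    have hLnodup : L.Nodup := hLsub.nodup allT_nodup
    have hLTF : L.toFinset = H := by
      ext t
      simp only [hL, List.mem_toFinset, List.mem_filter, decide_eq_true_eq]
      exact ⟨fun h => h.2, fun h => ⟨hsub t h, h⟩⟩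
    have hlen : L.length = 6 := by
      have := List.toFinset_card_of_nodup hLnodup
      rw [hLTF, h6] at this
      omega
    have hmem : L ∈ allT.sublistsLen 6 := List.mem_sublistsLen.2 ⟨hLsub, hlen⟩
    obtain ⟨φ, hφ, hm⟩ := key L hmem
    obtain ⟨picks, plen, pnd, psub, pcond⟩ := mtch_sound φ EPl L hLnodup hm
    have plen6 : picks.length = 6 := plen
    -- the hyperedge assigned to index `i`
    let pk : Fin 6 → Finset (Fin 5) := fun i => picks.get ⟨i.val, by omega⟩
    have pkinj : Function.Injective pk := by
      intro i j hij
      have h2 := congrArg Fin.val (List.nodup_iff_injective_get.1 pnd hij)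
      exact Fin.ext h2
    have pkH : ∀ i, pk i ∈ H := by
      intro i
      have hp : pk i ∈ picks := List.get_mem _ _
      have : pk i ∈ allT.filter (· ∈ H) := psub _ hp
      simpa using (List.mem_filter.1 this).2
    have pkcond : ∀ i : Fin 6, φ (EPl.get i).1 ∈ pk i ∧ φ (EPl.get i).2 ∈ pk i := by
      intro i
      exact pcond i.val i.isLt (by omega)
    refine ⟨φ, hφ, fun e => pk (Sym2.lift ⟨fIdx, fIdx_symm⟩ e.val), ?_, ?_, ?_⟩
    · -- injectivity of ψ
      intro e1 e2 h
      have h' := pkinj h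
      apply Subtype.ext
      obtain ⟨v1, hv1⟩ := e1
      obtain ⟨v2, hv2⟩ := e2
      simp only at h' ⊢
      induction v1 using Sym2.ind with
      | _ a b =>
        induction v2 using Sym2.ind with
        | _ c d =>
          have hab : a ≠ b := by
            rw [SimpleGraph.mem_edgeSet] at hv1
            exact (SimpleGraph.top_adj a b).1 hv1
          have hcd : c ≠ d := by
            rw [SimpleGraph.mem_edgeSet] at hv2
            exact (SimpleGraph.top_adj c d).1 hv2
          have h'' : fIdx a b = fIdx c d := h'
          calc s(a,b) = s((EPl.get (fIdx a b)).1, (EPl.get (fIdx a b)).2) :=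
                (recon a b hab).symm
            _ = s((EPl.get (fIdx c d)).1, (EPl.get (fIdx c d)).2) := by rw [h'']
            _ = s(c,d) := recon c d hcd
    · intro e
      exact Finset.mem_coe.2 (pkH _)
    · -- covering condition
      rintro ⟨v, hv⟩ x hx
      induction v using Sym2.ind with
      | _ a b =>
        have hab : a ≠ b := by
          rw [SimpleGraph.mem_edgeSet] at hv
          exact (SimpleGraph.top_adj a b).1 hv
        have hrec := recon a b hab
        rw [Sym2.eq_iff] at hrec
        obtain ⟨hcond1, hcond2⟩ := pkcond (fIdx a b)
        show φ x ∈ pk (Sym2.lift ⟨fIdx, fIdx_symm⟩ s(a,b))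
        rw [Sym2.lift_mk]
        rcases Sym2.mem_iff.1 hx with h | h <;> rw [h] <;>
          rcases hrec with ⟨h1, h2⟩ | ⟨h1, h2⟩
        · rw [h1] at hcond1; exact hcond1
        · rw [h2] at hcond2; exact hcond2
        · rw [h2] at hcond2; exact hcond2
        · rw [h1] at hcond1; exact hcond1
  · -- lower bound: 5 triples with no Berge-K₄ (pigeonhole: K₄ has 6 edges)
    refine ⟨{{0,1,2},{0,1,3},{0,1,4},{0,2,3},{0,2,4}}, by decide, by decide, ?_⟩
    rintro ⟨φ, hφ, ψ, hψinj, hψmem, _⟩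
    set H5 : Finset (Finset (Fin 5)) := {{0,1,2},{0,1,3},{0,1,4},{0,2,3},{0,2,4}} with hH5
    let e : Fin 6 → K4.edgeSet := fun i => ⟨(Sym2.mk (EPl.get i).1 (EPl.get i).2), edge_mem i⟩
    have einj : Function.Injective e := by
      intro i j hij
      have : (Sym2.mk (EPl.get i).1 (EPl.get i).2) = (Sym2.mk (EPl.get j).1 (EPl.get j).2) := congrArg Subtype.val hij
      have := congrArg (Sym2.lift ⟨fIdx, fIdx_symm⟩) this
      rwa [sIdx_edge, sIdx_edge] at this
    have hcard : (Finset.univ : Finset (Fin 6)).card ≤ H5.card := by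
      apply Finset.card_le_card_of_injOn (fun i => ψ (e i))
      · intro i _
        exact Finset.mem_coe.1 (hψmem (e i))
      · intro i _ j _ hij
        exact einj (hψinj hij)
    have h5 : H5.card = 5 := by rw [hH5]; decide
    have h6' : (Finset.univ : Finset (Fin 6)).card = 6 := rfl
    omega
end
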